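/- arXiv:1807.11026 — 8 statements merged into one kernel-verified Lean document; each statement's English description precedes it below -/
import Mathlib

section
/- For every rational tangle word (a_1, …, a_n): (1) a_1 is an NSI syllable; (2) if n ≥ 2, then a_2 is an SI syllable if and only if a_1 is even; (3) if 1 ≤ i < n and a_i is an SI syllable, then a_{i+1} is an NSI syllable. -/
/-- The three connectivity states of a partially built rational tangle:
`H = {NW–NE, SW–SE}`, `V = {NW–SW, NE–SE}`, `X = {NW–SE, NE–SW}`. -/
inductive TState : Type
  | H
  | V
  | X
  deriving DecidableEq

/-- Effect of a bottom crossing (a twist of SW and SE) on the connectivity state. -/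
def bstep : TState → TState
  | .H => .H
  | .V => .X
  | .X => .V

/-- Effect of a right crossing (a twist of NE and SE) on the connectivity state. -/
def rstep : TState → TState
  | .V => .V
  | .H => .X
  | .X => .H

/-- `step true` is a bottom crossing, `step false` is a right crossing. -/
def step : Bool → TState → TState
  | true => bstep
  | false => rstep

/-- The twist direction of the (0-based) `i`-th syllable: bottom iff `i` is even
(1-based odd syllables are bottom twists). -/
def sylDir (i : ℕ) : Bool := decide (i % 2 = 0)

/-- The state in which a crossing of the (0-based) `i`-th syllable is a self-intersection:
`H` for bottom syllables, `V` for right syllables. -/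
def siState (i : ℕ) : TState := if i % 2 = 0 then TState.H else TState.V

/-- Process a list of syllables starting from state `s`; the Boolean `b` records
whether the next syllable is a bottom syllable. Each syllable `a` applies
`|a|` crossings of the appropriate direction. -/
def runWord : List ℤ → Bool → TState → TState
  | [], _, s => s
  | a :: t, b, s => runWord t (!b) ((step b)^[a.natAbs] s)

/-- The connectivity state at the start of the (0-based) `i`-th syllable of the word `w`
(a rational tangle word starts in state `V`). -/
def stateAt (w : List ℤ) (i : ℕ) : TState := runWord (w.take i) true TState.V

/-- The (0-based) `i`-th syllable of `w` is an SI syllable. -/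
def IsSISyl (w : List ℤ) (i : ℕ) : Prop := stateAt w i = siState i

instance (w : List ℤ) (i : ℕ) : Decidable (IsSISyl w i) :=
  inferInstanceAs (Decidable (_ = _))

lemma runWord_append_singleton (l : List ℤ) (a : ℤ) (b : Bool) (s : TState) :
    runWord (l ++ [a]) b s =
      (step (xor b (decide (l.length % 2 = 1))))^[a.natAbs] (runWord l b s) := by
  induction l generalizing b s with
  | nil => simp [runWord]
  | cons x t ih =>
      simp only [List.cons_append, runWord, ih, List.length_cons]
      congr 2
      rcases Nat.mod_two_eq_zero_or_one t.length with h2 | h2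
      · have h3 : (t.length + 1) % 2 = 1 := by omega
        simp [h2, h3]
      · have h3 : (t.length + 1) % 2 = 0 := by omega
        simp [h2, h3]

lemma stateAt_succ (w : List ℤ) (i : ℕ) (h : i < w.length) :
    stateAt w (i + 1) = (step (sylDir i))^[(w.getD i 0).natAbs] (stateAt w i) := by
  have htake : w.take (i + 1) = w.take i ++ [w.getD i 0] := by
    rw [List.getD_eq_getElem w 0 h, List.take_succ, List.getElem?_eq_getElem h]
    simp
  unfold stateAt
  rw [htake, runWord_append_singleton]
  congr 2
  have : (w.take i).length = i := List.length_take_of_le (le_of_lt h)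
  rw [this]
  unfold sylDir
  rcases Nat.even_or_odd i with he | ho
  · have : i % 2 = 0 := Nat.even_iff.mp he
    simp [this]
  · have : i % 2 = 1 := Nat.odd_iff.mp ho
    simp [this]

lemma step_fix_siState (i k : ℕ) :
    (step (sylDir i))^[k] (siState i) = siState i := by
  apply Function.iterate_fixed
  unfold sylDir siState
  rcases Nat.even_or_odd i with he | ho
  · have : i % 2 = 0 := Nat.even_iff.mp he
    simp [this, step, bstep]
  · have : i % 2 = 1 := Nat.odd_iff.mp ho
    simp [this, step, rstep]

lemma siState_succ_ne (i : ℕ) : siState (i + 1) ≠ siState i := by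
  unfold siState
  rcases Nat.even_or_odd i with he | ho
  · have h : i % 2 = 0 := Nat.even_iff.mp he
    have h1 : (i + 1) % 2 = 1 := by omega
    simp [h, h1]
  · have h : i % 2 = 1 := Nat.odd_iff.mp ho
    have h1 : (i + 1) % 2 = 0 := by omega
    simp [h, h1]

lemma bstep_iter_V (k : ℕ) :
    bstep^[k] TState.V = if Even k then TState.V else TState.X := by
  induction k with
  | zero => simp
  | succ n ih =>
      rw [Function.iterate_succ_apply', ih]
      rcases Nat.even_or_odd n with he | ho
      · simp [he, Nat.even_add_one, bstep]
      · simp [Nat.not_even_iff_odd.mpr ho, Nat.even_add_one, bstep]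

/-- Proposition, conditions (1)–(3): for every rational tangle word
`(a_1, …, a_n)` (0-based indexing): the first syllable is an NSI syllable; if `n ≥ 2`
then the second syllable is an SI syllable iff the first syllable is even; and the
syllable following an SI syllable is an NSI syllable. -/
theorem prop_SI_first_conditions (w : List ℤ) :
    (0 < w.length → ¬ IsSISyl w 0) ∧
    (2 ≤ w.length → (IsSISyl w 1 ↔ Even (w.getD 0 0))) ∧
    (∀ i : ℕ, i + 1 < w.length → IsSISyl w i → ¬ IsSISyl w (i + 1)) := by
  refine ⟨?_, ?_, ?_⟩
  · intro _ h
    simp [IsSISyl, stateAt, siState, runWord] at h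
  · intro hlen
    have h0 : (0 : ℕ) < w.length := by omega
    have h1 : stateAt w 1 = (step (sylDir 0))^[(w.getD 0 0).natAbs] (stateAt w 0) :=
      stateAt_succ w 0 h0
    have h2 : stateAt w 0 = TState.V := by simp [stateAt, runWord]
    rw [h2] at h1
    have h3 : step (sylDir 0) = bstep := by simp [sylDir, step]
    rw [h3, bstep_iter_V] at h1
    unfold IsSISyl
    rw [h1]
    simp only [siState]
    rw [← Int.natAbs_even]
    by_cases hp : Even (w.getD 0 0).natAbs
    · simp [hp]
    · simp [hp]
  · intro i hi hsi
    unfold IsSISyl at *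
    rw [stateAt_succ w i (by omega), hsi, step_fix_siState]
    exact fun h => siState_succ_ne i h.symm
end

section
/- For every rational tangle word (a_1, …, a_n) and every index i with i + 2 ≤ n: (4) if a_i is an SI syllable, then a_{i+2} is an SI syllable if and only if a_{i+1} is even; (5) if a_i and a_{i+1} are NSI syllables and a_{i+1} is odd, then a_{i+2} is an SI syllable; (6) if a_i and a_{i+1} are NSI syllables and a_{i+1} is even, then a_{i+2} is an NSI syllable. -/
lemma step_step (d : Bool) (s : TState) : step d (step d s) = s := by
  cases d <;> cases s <;> rfl

lemma step_iter (d : Bool) (n : ℕ) (s : TState) :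
    (step d)^[n] s = if n % 2 = 0 then s else step d s := by
  induction n with
  | zero => simp
  | succ n ih =>
    rw [Function.iterate_succ_apply', ih]
    rcases Nat.mod_two_eq_zero_or_one n with h | h
    · have h1 : (n + 1) % 2 = 1 := by omega
      simp [h, h1]
    · have h1 : (n + 1) % 2 = 0 := by omega
      simp [h, h1, step_step]

lemma runWord_append (l₁ l₂ : List ℤ) (b : Bool) (s : TState) :
    runWord (l₁ ++ l₂) b s = runWord l₂ ((! ·)^[l₁.length] b) (runWord l₁ b s) := by
  induction l₁ generalizing b s with
  | nil => rfl
  | cons a t ih =>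
    simp [runWord, ih, Function.iterate_succ_apply]

lemma not_iter_true (n : ℕ) : (! ·)^[n] true = decide (n % 2 = 0) := by
  induction n with
  | zero => rfl
  | succ n ih =>
    rw [Function.iterate_succ_apply', ih]
    rcases Nat.mod_two_eq_zero_or_one n with h | h
    · have h1 : (n + 1) % 2 = 1 := by omega
      simp [h, h1]
    · have h1 : (n + 1) % 2 = 0 := by omega
      simp [h, h1]

/-- STATEMENT 2 (Proposition, conditions (4)–(6)), in 0-based indexing, for syllable
indices `i, i+1, i+2` of the word. -/
theorem prop_SI_last_conditions (w : List ℤ) (i : ℕ) (h : i + 2 < w.length) :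
    (IsSISyl w i → (IsSISyl w (i + 2) ↔ Even (w.getD (i + 1) 0))) ∧
    (¬ IsSISyl w i → ¬ IsSISyl w (i + 1) → Odd (w.getD (i + 1) 0) →
      IsSISyl w (i + 2)) ∧
    (¬ IsSISyl w i → ¬ IsSISyl w (i + 1) → Even (w.getD (i + 1) 0) →
      ¬ IsSISyl w (i + 2)) := by
  have h0 : i < w.length := by omega
  have h1 : i + 1 < w.length := by omega
  have e1 := stateAt_succ w i h0
  have e2 := stateAt_succ w (i + 1) h1
  unfold IsSISyl
  rw [e2, e1, step_iter, step_iter]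
  have hev : Even (w.getD (i + 1) 0) ↔ (w.getD (i + 1) 0).natAbs % 2 = 0 := by
    rw [← Int.natAbs_even, Nat.even_iff]
  have hod : Odd (w.getD (i + 1) 0) ↔ (w.getD (i + 1) 0).natAbs % 2 = 1 := by
    rw [← Int.natAbs_odd, Nat.odd_iff]
  rw [hev, hod]
  rcases Nat.mod_two_eq_zero_or_one ((w.getD i 0).natAbs) with hp | hp <;>
  rcases Nat.mod_two_eq_zero_or_one ((w.getD (i + 1) 0).natAbs) with hq | hq <;>
  rcases Nat.mod_two_eq_zero_or_one i with hi | hi <;>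
  · have hi1 : (i + 1) % 2 = 1 - i % 2 := by omega
    have hi2 : (i + 2) % 2 = i % 2 := by omega
    simp only [sylDir, siState, hp, hq, hi, hi1, hi2]
    cases stateAt w i <;> simp <;> decide
end

section
/- Let (a_1, …, a_n) be a nonempty finite sequence of integers such that a_i = 0 for every odd index i. Then (a_1, …, a_n) ≈ (0), the single-entry zero word. -/
/-- Tangle-word reduction: the smallest equivalence relation on nonempty finite
sequences of integers closed under the moves (0)–(5). -/
inductive TEq : List ℤ → List ℤ → Prop
  /-- (0) `(a_1,…,a_k,0) ≈ (a_1,…,a_k)` -/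
  | move0 (l : List ℤ) (h : l ≠ []) : TEq (l ++ [0]) l
  /-- (1) `(a_1,…,a_i,0,a_{i+1},…,a_n) ≈ (a_1,…,a_{i-1},a_i+a_{i+1},a_{i+2},…,a_n)` -/
  | move1 (l r : List ℤ) (a b : ℤ) : TEq (l ++ a :: 0 :: b :: r) (l ++ (a + b) :: r)
  /-- (2) `(a_1,…,a_i,0,0,a_{i+1},…,a_n) ≈ (a_1,…,a_i,a_{i+1},…,a_n)` -/
  | move2 (l r : List ℤ) (h : l ++ r ≠ []) : TEq (l ++ 0 :: 0 :: r) (l ++ r)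
  /-- (3) `(0,a+1,a_2,…,a_n) ≈ (0,a,a_2,…,a_n)` -/
  | move3 (a : ℤ) (r : List ℤ) : TEq (0 :: (a + 1) :: r) (0 :: a :: r)
  /-- (4) `(1,a,a_2,…,a_n) ≈ (a+1,a_2,…,a_n)` -/
  | move4 (a : ℤ) (r : List ℤ) : TEq (1 :: a :: r) ((a + 1) :: r)
  /-- (5) `(-1,a,a_2,…,a_n) ≈ (a-1,a_2,…,a_n)` -/
  | move5 (a : ℤ) (r : List ℤ) : TEq ((-1) :: a :: r) ((a - 1) :: r)
  | refl (l : List ℤ) : TEq l l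
  | symm {l₁ l₂ : List ℤ} : TEq l₁ l₂ → TEq l₂ l₁
  | trans {l₁ l₂ l₃ : List ℤ} : TEq l₁ l₂ → TEq l₂ l₃ → TEq l₁ l₃


lemma zero_fill (a : ℤ) (r : List ℤ) : TEq (0 :: a :: r) (0 :: 0 :: r) := by
  induction a using Int.induction_on with
  | zero => exact TEq.refl _
  | succ i ih => exact TEq.trans (TEq.move3 (i : ℤ) r) ih
  | pred i ih =>
      have h3 := TEq.move3 (-(i : ℤ) - 1) r
      rw [show (-(i : ℤ) - 1 + 1) = -(i : ℤ) by ring] at h3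
      exact TEq.trans (TEq.symm h3) ih

lemma odd_aux : ∀ n (w : List ℤ), w.length = n → w ≠ [] →
    (∀ i : ℕ, i < w.length → i % 2 = 0 → w.getD i 0 = 0) → TEq w [0] := by
  intro n
  induction n using Nat.strong_induction_on with
  | _ n ih =>
    intro w hlen hne h
    match w with
    | [] => exact absurd rfl hne
    | a :: t =>
      have ha : a = 0 := by simpa using h 0 (by simp) rfl
      subst ha
      match t with
      | [] => exact TEq.refl _
      | b :: r =>
        have hfill := zero_fill b r
        match r with
        | [] =>
          exact TEq.trans hfill (TEq.move0 [0] (by simp))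
        | c :: s =>
          have h2 := TEq.move2 [] (c :: s) (by simp)
          simp only [List.nil_append] at h2
          refine TEq.trans hfill (TEq.trans h2 ?_)
          refine ih (c :: s).length ?_ (c :: s) rfl (by simp) ?_
          · have : (c :: s).length + 2 = n := by simpa using hlen.symm ▸ rfl
            omega
          · intro i hi hp
            have := h (i + 2) (by simpa using Nat.add_lt_add_right hi 2) (by omega)
            simpa using this

/-- a nonempty finite sequence of integers whose entries at every odd
(1-based) position vanish reduces to the single-entry zero word `(0)`.
(1-based odd positions are 0-based even positions.) -/
theorem odd_positions_zero_reduces (w : List ℤ) (hne : w ≠ [])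
    (h : ∀ i : ℕ, i < w.length → i % 2 = 0 → w.getD i 0 = 0) :
    TEq w [0] := by
  exact odd_aux w.length w rfl hne h
end

section
/- Let (n_1, …, n_k) ∈ ℕ^k with every n_i even, and suppose n_m > 0 for some fixed odd index m. In the resolution game on (n_1, …, n_k), the second player can force the resulting word to satisfy s_i = 0 for all i ≠ m and s_m ∈ {2, −2}. -/
section SignGame

variable {C : Type*} [Fintype C]

/-- A play of the sign-assignment game is a list of moves, each assigning a sign to a
crossing; it is legal if no crossing is chosen twice and every sign is `+1` or `-1`. -/
def LegalPlay (p : List (C × ℤ)) : Prop :=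
  (p.map Prod.fst).Nodup ∧ ∀ m ∈ p, m.2 = 1 ∨ m.2 = -1

/-- The play `p` follows the strategy `σ` of the player who moves at all positions whose
number of prior moves is congruent to `parity` mod 2 (`parity = 0`: first player;
`parity = 1`: second player). -/
def Follows (parity : ℕ) (σ : List (C × ℤ) → C × ℤ) (p : List (C × ℤ)) : Prop :=
  ∀ (i : ℕ) (hi : i < p.length), i % 2 = parity → p.get ⟨i, hi⟩ = σ (p.take i)

/-- The strategy `σ` always produces a legal move (an unchosen crossing with sign `±1`)
at the positions where its player is to move. -/
def LegalStrat (parity : ℕ) (σ : List (C × ℤ) → C × ℤ) : Prop :=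
  ∀ p : List (C × ℤ), LegalPlay p → p.length % 2 = parity → p.length < Fintype.card C →
    (σ p).1 ∉ p.map Prod.fst ∧ ((σ p).2 = 1 ∨ (σ p).2 = -1)

/-- The player moving at positions of parity `parity` can force the predicate `P` on
complete plays: they have a legal strategy such that every complete legal play following
it satisfies `P`. -/
def CanForce (parity : ℕ) (P : List (C × ℤ) → Prop) : Prop :=
  ∃ σ : List (C × ℤ) → C × ℤ, LegalStrat parity σ ∧
    ∀ p : List (C × ℤ), LegalPlay p → p.length = Fintype.card C → Follows parity σ p → P p

end SignGame

/-- The crossings of the resolution game on syllable sizes `n = (n_1, …, n_k)`: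
pairs `(i, j)` with `i` a syllable index and `j < n_i`. -/
abbrev Cr (n : List ℕ) : Type := Σ i : Fin n.length, Fin (n.get i)

/-- The resulting word `(s_1, …, s_k)` of a complete play of the resolution game:
`s_i` is the sum of the signs assigned to the crossings of the `i`-th syllable. -/
def result (n : List ℕ) (p : List (Cr n × ℤ)) : List ℤ :=
  (List.finRange n.length).map fun i =>
    ((p.filter fun m => decide (m.1.1 = i)).map Prod.snd).sum

namespace SFAux

def pval (j : ℕ) : ℕ := if j % 2 = 0 then j + 1 else j - 1

lemma pval_lt {j e : ℕ} (hj : j < e) (he : e % 2 = 0) : pval j < e := by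
  unfold pval; split <;> omega

lemma pval_pval (j : ℕ) : pval (pval j) = j := by
  simp only [pval]; split <;> split <;> omega

lemma pval_ne (j : ℕ) : pval j ≠ j := by
  unfold pval; split <;> omega

lemma pval_lt_two (j : ℕ) : pval j < 2 ↔ j < 2 := by
  unfold pval; split <;> omega

variable {n : List ℕ}

lemma cr_ext {c d : Cr n} (h1 : c.1 = d.1) (h2 : c.2.1 = d.2.1) : c = d := by
  obtain ⟨i, j⟩ := c; obtain ⟨i', j'⟩ := d
  dsimp at h1; subst h1
  exact congrArg _ (Fin.ext h2)

/-- the partner of a crossing -/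
def pt (c : Cr n) : Cr n := ⟨c.1, ⟨pval c.2.1 % n.get c.1, Nat.mod_lt _ c.2.pos⟩⟩

lemma pt_fst (c : Cr n) : (pt c).1 = c.1 := rfl

lemma pt_snd (h : ∀ x ∈ n, Even x) (c : Cr n) : (pt c).2.1 = pval c.2.1 := by
  have he : (n.get c.1) % 2 = 0 := Nat.even_iff.mp (h _ (n.get_mem _))
  show pval c.2.1 % n.get c.1 = pval c.2.1
  exact Nat.mod_eq_of_lt (pval_lt c.2.2 he)

lemma pt_pt (h : ∀ x ∈ n, Even x) (c : Cr n) : pt (pt c) = c := by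
  refine cr_ext rfl ?_
  rw [pt_snd h, pt_snd h, pval_pval]

lemma pt_ne (h : ∀ x ∈ n, Even x) (c : Cr n) : pt c ≠ c := by
  intro he
  have := congrArg (fun x : Cr n => x.2.1) he
  rw [pt_snd h] at this
  exact pval_ne _ this

noncomputable def freshC (n : List ℕ) (q : List (Cr n × ℤ)) (d : Cr n) : Cr n :=
  if h : ∃ c : Cr n, c ∉ q.map Prod.fst then h.choose else d

noncomputable def strat (n : List ℕ) (m : Fin n.length) (d : Cr n)
    (q : List (Cr n × ℤ)) : Cr n × ℤ :=
  q.getLast?.elim (d, 1) (fun ce =>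
    if pt ce.1 ∈ q.map Prod.fst then (freshC n q d, 1)
    else (pt ce.1, if ce.1.1 = m ∧ ce.1.2.1 < 2 then ce.2 else -ce.2))

lemma sum_filter_map {α : Type*} (Q : α → Bool) (f : α → ℤ) (l : List α) :
    ((l.filter Q).map f).sum = (l.map fun x => if Q x then f x else 0).sum := by
  induction l with
  | nil => simp
  | cons a l ih => by_cases hq : Q a <;> simp [List.filter_cons, hq, ih]

lemma sum_map_eq_sum_range {α : Type*} (f : α → ℤ) (d : α) (l : List α) :
    (l.map f).sum = ∑ j ∈ Finset.range l.length, f (l.getD j d) := by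
  induction l with
  | nil => simp
  | cons a l ih =>
    rw [List.length_cons, Finset.sum_range_succ']
    simp [ih, add_comm]

lemma sum_range_pair (f : ℕ → ℤ) (T : ℕ) :
    ∑ j ∈ Finset.range (2*T), f j = ∑ t ∈ Finset.range T, (f (2*t) + f (2*t+1)) := by
  induction T with
  | zero => simp
  | succ T ih =>
    rw [show 2*(T+1) = (2*T+1)+1 by ring, Finset.sum_range_succ, Finset.sum_range_succ,
      Finset.sum_range_succ, ih]
    ring

lemma complete_of {α : Type*} [Fintype α] [DecidableEq α] (l : List α) (hn : l.Nodup)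
    (hl : l.length = Fintype.card α) (x : α) : x ∈ l := by
  have : l.toFinset = Finset.univ :=
    Finset.eq_univ_of_card _ (by rw [List.toFinset_card_of_nodup hn, hl])
  rw [← List.mem_toFinset, this]; exact Finset.mem_univ x

lemma result_getD (n : List ℕ) (p : List (Cr n × ℤ)) (i : Fin n.length) :
    (result n p).getD (i : ℕ) 0
      = ((p.filter fun mv => decide (mv.1.1 = i)).map Prod.snd).sum := by
  have h1 : (i : ℕ) < (result n p).length := by simp [result]
  rw [List.getD_eq_getElem _ _ h1]
  simp [result]

end SFAux

open SFAux

/-- in the resolution game on `(n_1, …, n_k)` with every `n_i` even and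
`n_m > 0` for a fixed odd (1-based) index `m` (0-based: `m % 2 = 0`), the second player
can force `s_i = 0` for all `i ≠ m` and `s_m ∈ {2, -2}`. -/
theorem second_forces_pm_two_at_m (n : List ℕ) (h : ∀ x ∈ n, Even x)
    (m : Fin n.length) (hmodd : (m : ℕ) % 2 = 0) (hpos : 0 < n.get m) :
    CanForce (C := Cr n) 1 (fun p =>
      (∀ i : Fin n.length, i ≠ m → (result n p).getD (i : ℕ) 0 = 0) ∧
      ((result n p).getD (m : ℕ) 0 = 2 ∨ (result n p).getD (m : ℕ) 0 = -2)) := by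
  classical
  set a : Cr n := ⟨m, ⟨0, hpos⟩⟩ with ha_def
  refine ⟨strat n m a, ?_, ?_⟩
  · -- legality of the strategy
    intro p hp hpar hlen
    have hne : p ≠ [] := by
      intro hnil; rw [hnil] at hpar; simp at hpar
    have hce : p.getLast? = some (p.getLast hne) := List.getLast?_eq_getLast hne
    set ce := p.getLast hne with hce_def
    have hcemem : ce ∈ p := List.getLast_mem hne
    have hsgn := hp.2 ce hcemem
    unfold strat
    rw [hce]
    simp only [Option.elim]
    by_cases hmem : pt ce.1 ∈ p.map Prod.fst
    · rw [if_pos hmem]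
      refine ⟨?_, Or.inl rfl⟩
      have hex : ∃ c : Cr n, c ∉ p.map Prod.fst := by
        by_contra hno
        push_neg at hno
        have h1 : (p.map Prod.fst).toFinset = Finset.univ :=
          Finset.eq_univ_iff_forall.mpr (fun x => List.mem_toFinset.mpr (hno x))
        have h2 : Fintype.card (Cr n) ≤ (p.map Prod.fst).length := by
          calc Fintype.card (Cr n) = (p.map Prod.fst).toFinset.card := by rw [h1]; rfl
          _ ≤ (p.map Prod.fst).length := (p.map Prod.fst).toFinset_card_le
        rw [List.length_map] at h2
        omega
      show freshC n p a ∉ p.map Prod.fst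
      unfold freshC
      rw [dif_pos hex]
      exact hex.choose_spec
    · rw [if_neg hmem]
      refine ⟨hmem, ?_⟩
      dsimp only
      split
      · exact hsgn
      · rcases hsgn with h1 | h1 <;> rw [h1] <;> simp
  ·
    intro p hp hlen hfol
    have hnod : (p.map Prod.fst).Nodup := hp.1
    have ha2 : a.2.1 = 0 := rfl
    have heven : Even (Fintype.card (Cr n)) := by
      rw [Fintype.card_sigma]
      apply Finset.even_sum
      intro i _
      simpa using h _ (n.get_mem _)
    obtain ⟨T, hT⟩ : ∃ T, p.length = 2*T := by
      obtain ⟨r, hr⟩ := heven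
      exact ⟨r, by omega⟩
    have hinj : ∀ (j1 j2 : ℕ) (h1 : j1 < p.length) (h2 : j2 < p.length),
        (p[j1]'h1).1 = (p[j2]'h2).1 → j1 = j2 := by
      intro j1 j2 h1 h2 heq
      have hl1 : j1 < (p.map Prod.fst).length := by rw [List.length_map]; exact h1
      have hl2 : j2 < (p.map Prod.fst).length := by rw [List.length_map]; exact h2
      have : (p.map Prod.fst)[j1]'hl1 = (p.map Prod.fst)[j2]'hl2 := by
        simpa using heq
      exact (hnod.getElem_inj_iff).mp this
    have pairstep : ∀ t (ht : 2*t+1 < p.length) (h2t : 2*t < p.length),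
        (∀ c ∈ (p.take (2*t)).map Prod.fst, pt c ∈ (p.take (2*t)).map Prod.fst) →
        p[2*t+1]'ht = (pt (p[2*t]'h2t).1,
          if (p[2*t]'h2t).1.1 = m ∧ (p[2*t]'h2t).1.2.1 < 2
          then (p[2*t]'h2t).2 else -(p[2*t]'h2t).2) := by
      intro t ht h2t hcl
      have hfw := hfol (2*t+1) ht (by omega)
      have htake : p.take (2*t+1) = p.take (2*t) ++ [p[2*t]'h2t] := by
        rw [List.take_succ, List.getElem?_eq_getElem h2t]
        rfl
      have hlast : (p.take (2*t+1)).getLast? = some (p[2*t]'h2t) := by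
        rw [htake]; exact List.getLast?_concat
      have hnotmem : pt (p[2*t]'h2t).1 ∉ (p.take (2*t+1)).map Prod.fst := by
        rw [htake, List.map_append, List.mem_append]
        rintro (hin | hin)
        · have hc : (p[2*t]'h2t).1 ∈ (p.take (2*t)).map Prod.fst := by
            have := hcl _ hin
            rwa [pt_pt h] at this
          rw [List.map_take] at hc
          obtain ⟨j, hj, hje⟩ := List.mem_iff_getElem.mp hc
          have hj2 : j < 2*t := by
            have := hj; simp [List.length_take] at this; omega
          rw [List.getElem_take] at hje
          have : j = 2*t := by
            apply hinj j (2*t) (by omega) h2t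
            simpa using hje
          omega
        · simp only [List.map_cons, List.map_nil, List.mem_singleton] at hin
          exact pt_ne h _ hin
      rw [List.get_eq_getElem] at hfw
      rw [hfw]
      unfold strat
      rw [hlast]
      simp only [Option.elim]
      rw [if_neg hnotmem]
    have closed : ∀ t, 2*t ≤ p.length →
        (∀ c ∈ (p.take (2*t)).map Prod.fst, pt c ∈ (p.take (2*t)).map Prod.fst) := by
      intro t
      induction t with
      | zero => intro _; simp
      | succ t ih =>
        intro hle
        have h2t : 2*t < p.length := by omega
        have ht1 : 2*t+1 < p.length := by omega
        have hcl := ih (by omega)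
        have hpr := pairstep t ht1 h2t hcl
        have e1 : p.take (2*t+1) = p.take (2*t) ++ [p[2*t]'h2t] := by
          rw [List.take_succ, List.getElem?_eq_getElem h2t]
          rfl
        have htk : p.take (2*(t+1)) = p.take (2*t) ++ [p[2*t]'h2t, p[2*t+1]'ht1] := by
          rw [show 2*(t+1) = (2*t+1)+1 by ring, List.take_succ,
            List.getElem?_eq_getElem ht1, e1]
          simp only [Option.toList_some, List.append_assoc, List.cons_append,
            List.nil_append]
        intro c hc
        rw [htk, List.map_append] at hc ⊢
        simp only [List.mem_append, List.map_cons, List.map_nil, List.mem_cons,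
          List.not_mem_nil, or_false] at hc ⊢
        rcases hc with hc | hc | hc
        · exact Or.inl (hcl c hc)
        · subst hc
          right; right
          rw [hpr]
        · subst hc
          right; left
          rw [hpr]
          exact pt_pt h _
    set dm : Cr n × ℤ := (a, 1) with hdm_def
    set M : ℕ → Cr n × ℤ := fun j => p.getD j dm with hM_def
    have hM : ∀ (j : ℕ) (hj : j < p.length), M j = p[j]'hj :=
      fun j hj => List.getD_eq_getElem p dm hj
    have hMpair : ∀ t, t < T →
        M (2*t+1) = (pt (M (2*t)).1,
          if (M (2*t)).1.1 = m ∧ (M (2*t)).1.2.1 < 2 then (M (2*t)).2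
          else -(M (2*t)).2) := by
      intro t ht
      have h1 : 2*t+1 < p.length := by omega
      have h0 : 2*t < p.length := by omega
      rw [hM _ h1, hM _ h0]
      exact pairstep t h1 h0 (closed t (by omega))
    have hMmem : ∀ (j : ℕ), j < p.length → M j ∈ p := by
      intro j hj
      rw [hM _ hj]
      exact List.getElem_mem _
    have hsum : ∀ i : Fin n.length, (result n p).getD (i : ℕ) 0 =
        ∑ t ∈ Finset.range T,
          ((if (M (2*t)).1.1 = i then (M (2*t)).2 else 0)
            + (if (M (2*t+1)).1.1 = i then (M (2*t+1)).2 else 0)) := by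
      intro i
      rw [result_getD, sum_filter_map, sum_map_eq_sum_range _ dm, hT, sum_range_pair]
      refine Finset.sum_congr rfl ?_
      intro t _
      simp [hM_def, decide_eq_true_eq]
    constructor
    · intro i him
      rw [hsum i]
      apply Finset.sum_eq_zero
      intro t ht
      rw [Finset.mem_range] at ht
      rw [hMpair t ht]
      simp only [pt_fst]
      by_cases hc : (M (2*t)).1.1 = i
      · have hnotm : ¬((M (2*t)).1.1 = m ∧ (M (2*t)).1.2.1 < 2) := by
          rintro ⟨h1, -⟩
          exact him (hc.symm.trans h1)
        simp only [if_pos hc, if_neg hnotm]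
        ring
      · simp only [if_neg hc, hc, if_false]
        ring
    · rw [hsum m]
      have hterm : ∀ t ∈ Finset.range T,
          ((if (M (2*t)).1.1 = m then (M (2*t)).2 else 0)
            + (if (M (2*t+1)).1.1 = m then (M (2*t+1)).2 else 0))
          = if (M (2*t)).1.1 = m ∧ (M (2*t)).1.2.1 < 2 then 2 * (M (2*t)).2 else 0 := by
        intro t ht
        rw [Finset.mem_range] at ht
        rw [hMpair t ht]
        simp only [pt_fst]
        by_cases h1 : (M (2*t)).1.1 = m
        · by_cases h2 : (M (2*t)).1.2.1 < 2
          · simp only [if_pos h1, if_pos (And.intro h1 h2)]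
            ring
          · simp only [if_pos h1, if_neg (fun hh : _ ∧ _ => h2 hh.2)]
            ring
        · simp only [if_neg h1, if_neg (fun hh : _ ∧ _ => h1 hh.1)]
          ring
      have hmem_a : a ∈ p.map Prod.fst :=
        complete_of _ hnod (by rw [List.length_map, hlen]) a
      obtain ⟨j, hjl, hje⟩ := List.mem_iff_getElem.mp hmem_a
      have hjp : j < p.length := by simpa using hjl
      have hje' : (p[j]'hjp).1 = a := by simpa using hje
      have hQ : ∃ t0, t0 < T ∧ ((M (2*t0)).1.1 = m ∧ (M (2*t0)).1.2.1 < 2) := by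
        rcases Nat.even_or_odd j with hj | hj
        · obtain ⟨t0, ht0⟩ := hj
          refine ⟨t0, by omega, ?_⟩
          rw [show 2*t0 = j by omega, hM _ hjp, hje']
          exact ⟨rfl, by rw [ha2]; norm_num⟩
        · obtain ⟨t0, ht0⟩ := hj
          refine ⟨t0, by omega, ?_⟩
          have hMj : M (2*t0+1) = p[j]'hjp := by
            rw [show 2*t0+1 = j by omega, hM _ hjp]
          have hpt : pt (M (2*t0)).1 = a := by
            have h21 : (M (2*t0+1)).1 = pt (M (2*t0)).1 := by
              rw [hMpair t0 (by omega)]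
            rw [← h21, hMj, hje']
          have hc : (M (2*t0)).1 = pt a := by
            rw [← hpt, pt_pt h]
          refine ⟨by rw [hc]; rfl, ?_⟩
          rw [hc, pt_snd h, ha2]
          rw [pval_lt_two]
          norm_num
      obtain ⟨t0, ht0T, hQ0⟩ := hQ
      have hspec : ∀ c : Cr n, c.1 = m → c.2.1 < 2 → c = a ∨ c = pt a := by
        intro c hc1 hc2
        have hpa2 : (pt a).2.1 = 1 := by rw [pt_snd h, ha2]; rfl
        rcases (show c.2.1 = 0 ∨ c.2.1 = 1 by omega) with h0 | h0
        · exact Or.inl (cr_ext hc1 (by rw [h0, ha2]))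
        · exact Or.inr (cr_ext hc1 (by rw [h0, hpa2]))
      have huniq : ∀ t ∈ Finset.range T, t ≠ t0 →
          (if (M (2*t)).1.1 = m ∧ (M (2*t)).1.2.1 < 2 then 2 * (M (2*t)).2 else 0) = 0 := by
        intro t ht hne
        rw [Finset.mem_range] at ht
        rw [if_neg]
        rintro ⟨h1, h2⟩
        have hs1 := hspec _ h1 h2
        have hs0 := hspec _ hQ0.1 hQ0.2
        have hneq : (M (2*t)).1 ≠ (M (2*t0)).1 := by
          intro he
          rw [hM _ (show 2*t < p.length by omega), hM _ (show 2*t0 < p.length by omega)] at he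
          have := hinj _ _ _ _ he
          omega
        have hrel : (M (2*t)).1 = pt (M (2*t0)).1 := by
          rcases hs1 with e1 | e1 <;> rcases hs0 with e0 | e0
          · exact absurd (e1.trans e0.symm) hneq
          · rw [e1, e0, pt_pt h]
          · rw [e1, e0]
          · exact absurd (e1.trans e0.symm) hneq
        have h21 : (M (2*t0+1)).1 = pt (M (2*t0)).1 := by
          rw [hMpair t0 ht0T]
        have he : (M (2*t)).1 = (M (2*t0+1)).1 := by
          rw [hrel, h21]
        rw [hM _ (show 2*t < p.length by omega),
          hM _ (show 2*t0+1 < p.length by omega)] at he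
        have := hinj _ _ _ _ he
        omega
      rw [Finset.sum_congr rfl hterm,
        Finset.sum_eq_single_of_mem t0 (Finset.mem_range.mpr ht0T) huniq,
        if_pos hQ0]
      rcases hp.2 (M (2*t0)) (hMmem _ (by omega)) with he | he <;> rw [he]
      · left; norm_num
      · right; norm_num
end

section
/- Let n_1 and n_2 be odd natural numbers. In the resolution game on (n_1, n_2), the second player can force the resulting word (s_1, s_2) to lie in {(1, 1), (−1, −1)}. -/
namespace S10

variable (n₁ n₂ : ℕ)

abbrev NN (i : Fin 2) : ℕ := [n₁, n₂].get i

lemma NN_pos (h₁ : Odd n₁) (h₂ : Odd n₂) (i : Fin 2) : 0 < NN n₁ n₂ i := by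
  rcases i with ⟨i, hi⟩
  interval_cases i <;> simp [NN] <;> [exact h₁.pos; exact h₂.pos]

lemma NN_odd (h₁ : Odd n₁) (h₂ : Odd n₂) (i : Fin 2) : NN n₁ n₂ i % 2 = 1 := by
  rcases i with ⟨i, hi⟩
  interval_cases i <;> simp [NN] <;> [exact Nat.odd_iff.mp h₁; exact Nat.odd_iff.mp h₂]

def other (i : Fin 2) : Fin 2 := ⟨1 - i.1, by omega⟩

lemma other_other (i : Fin 2) : other (other i) = i := by
  rcases i with ⟨i, hi⟩; interval_cases i <;> rfl

lemma other_ne (i : Fin 2) : other i ≠ i := by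
  rcases i with ⟨i, hi⟩; interval_cases i <;> simp [other]

variable (h₁ : Odd n₁) (h₂ : Odd n₂)

/-- the special crossing of syllable `i` -/
def sp (i : Fin 2) : Cr [n₁, n₂] :=
  ⟨i, ⟨NN n₁ n₂ i - 1, Nat.sub_lt (NN_pos n₁ n₂ h₁ h₂ i) one_pos⟩⟩

/-- the pairing (matching) on crossings -/
def M (c : Cr [n₁, n₂]) : Cr [n₁, n₂] :=
  if h : (c.2 : ℕ) = NN n₁ n₂ c.1 - 1 then sp n₁ n₂ h₁ h₂ (other c.1)
  else ⟨c.1, ⟨if (c.2 : ℕ) % 2 = 0 then (c.2 : ℕ) + 1 else (c.2 : ℕ) - 1, by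
    have hlt : (c.2 : ℕ) < [n₁, n₂].get c.1 := c.2.isLt
    have h' : (c.2 : ℕ) ≠ [n₁, n₂].get c.1 - 1 := h
    split <;> omega⟩⟩

def eps (c : Cr [n₁, n₂]) : ℤ :=
  if (c.2 : ℕ) = NN n₁ n₂ c.1 - 1 then 1 else -1

end S10

namespace S10

variable {n₁ n₂ : ℕ} {h₁ : Odd n₁} {h₂ : Odd n₂}

lemma Cr_ext {c d : Cr [n₁, n₂]} (e1 : c.1 = d.1) (e2 : (c.2 : ℕ) = (d.2 : ℕ)) : c = d := by
  rcases c with ⟨i, j⟩; rcases d with ⟨i', j'⟩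
  cases e1
  simp only at e2
  exact congrArg _ (Fin.ext e2)

lemma sp_fst (i : Fin 2) : (sp n₁ n₂ h₁ h₂ i).1 = i := rfl

lemma sp_snd (i : Fin 2) : ((sp n₁ n₂ h₁ h₂ i).2 : ℕ) = NN n₁ n₂ i - 1 := rfl

lemma spec_eq_sp {c : Cr [n₁, n₂]} (hs : (c.2 : ℕ) = NN n₁ n₂ c.1 - 1) :
    c = sp n₁ n₂ h₁ h₂ c.1 := Cr_ext rfl hs

lemma M_spec {c : Cr [n₁, n₂]} (hs : (c.2 : ℕ) = NN n₁ n₂ c.1 - 1) :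
    M n₁ n₂ h₁ h₂ c = sp n₁ n₂ h₁ h₂ (other c.1) := dif_pos hs

lemma M_nonspec_fst {c : Cr [n₁, n₂]} (hn : ¬ (c.2 : ℕ) = NN n₁ n₂ c.1 - 1) :
    (M n₁ n₂ h₁ h₂ c).1 = c.1 := by
  rw [M, dif_neg hn]

lemma M_nonspec_snd {c : Cr [n₁, n₂]} (hn : ¬ (c.2 : ℕ) = NN n₁ n₂ c.1 - 1) :
    ((M n₁ n₂ h₁ h₂ c).2 : ℕ) =
      if (c.2 : ℕ) % 2 = 0 then (c.2 : ℕ) + 1 else (c.2 : ℕ) - 1 := by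
  rw [M, dif_neg hn]

lemma sp_is_spec (i : Fin 2) :
    ((sp n₁ n₂ h₁ h₂ i).2 : ℕ) = NN n₁ n₂ (sp n₁ n₂ h₁ h₂ i).1 - 1 := rfl

lemma M_sp (i : Fin 2) : M n₁ n₂ h₁ h₂ (sp n₁ n₂ h₁ h₂ i) = sp n₁ n₂ h₁ h₂ (other i) :=
  M_spec (sp_is_spec i)

lemma M_nonspec_isnonspec {c : Cr [n₁, n₂]} (hn : ¬ (c.2 : ℕ) = NN n₁ n₂ c.1 - 1) :
    ¬ ((M n₁ n₂ h₁ h₂ c).2 : ℕ) = NN n₁ n₂ (M n₁ n₂ h₁ h₂ c).1 - 1 := by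
  rw [M, dif_neg hn]
  show ¬ (if (c.2 : ℕ) % 2 = 0 then (c.2 : ℕ) + 1 else (c.2 : ℕ) - 1) = NN n₁ n₂ c.1 - 1
  have hlt : (c.2 : ℕ) < NN n₁ n₂ c.1 := c.2.isLt
  have hodd := NN_odd n₁ n₂ h₁ h₂ c.1
  split <;> omega

lemma M_ne (c : Cr [n₁, n₂]) : M n₁ n₂ h₁ h₂ c ≠ c := by
  by_cases hs : (c.2 : ℕ) = NN n₁ n₂ c.1 - 1
  · rw [M_spec hs]
    intro he
    have h' := congrArg Sigma.fst he
    rw [sp_fst] at h'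
    exact other_ne c.1 h'
  · intro he
    have h' := congrArg (fun d : Cr [n₁, n₂] => (d.2 : ℕ)) he
    change ((M n₁ n₂ h₁ h₂ c).2 : ℕ) = (c.2 : ℕ) at h'
    rw [M_nonspec_snd hs] at h'
    have hlt : (c.2 : ℕ) < NN n₁ n₂ c.1 := c.2.isLt
    split at h' <;> omega

lemma M_invol (c : Cr [n₁, n₂]) : M n₁ n₂ h₁ h₂ (M n₁ n₂ h₁ h₂ c) = c := by
  by_cases hs : (c.2 : ℕ) = NN n₁ n₂ c.1 - 1
  · rw [M_spec hs, M_sp, other_other, ← spec_eq_sp hs]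
  · have h2 := M_nonspec_isnonspec (h₁ := h₁) (h₂ := h₂) hs
    refine Cr_ext ?_ ?_
    · rw [M_nonspec_fst h2, M_nonspec_fst hs]
    · rw [M_nonspec_snd h2, M_nonspec_snd hs]
      have hlt : (c.2 : ℕ) < NN n₁ n₂ c.1 := c.2.isLt
      by_cases hp : (c.2 : ℕ) % 2 = 0
      · rw [if_pos hp, if_neg (by omega)]
        omega
      · rw [if_neg hp, if_pos (by omega)]
        omega

lemma eps_M (c : Cr [n₁, n₂]) : eps n₁ n₂ (M n₁ n₂ h₁ h₂ c) = eps n₁ n₂ c := by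
  by_cases hs : (c.2 : ℕ) = NN n₁ n₂ c.1 - 1
  · rw [M_spec hs, eps, eps, if_pos hs, if_pos (sp_is_spec _)]
  · rw [eps, eps, if_neg hs, if_neg (M_nonspec_isnonspec hs)]

end S10

namespace S10

variable (n₁ n₂ : ℕ) (h₁ : Odd n₁) (h₂ : Odd n₂)

/-- The second player's strategy: respond to the opponent's last move `(c, s)` with
`(M c, eps c * s)` if possible, otherwise play any unchosen crossing. -/
noncomputable def str (p : List (Cr [n₁, n₂] × ℤ)) : Cr [n₁, n₂] × ℤ :=
  (p.getLast?).elim (sp n₁ n₂ h₁ h₂ 0, 1) fun m =>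
    if M n₁ n₂ h₁ h₂ m.1 ∈ p.map Prod.fst then
      (if h : ∃ c : Cr [n₁, n₂], c ∉ p.map Prod.fst then h.choose else sp n₁ n₂ h₁ h₂ 0, 1)
    else (M n₁ n₂ h₁ h₂ m.1, eps n₁ n₂ m.1 * m.2)

lemma str_concat (q : List (Cr [n₁, n₂] × ℤ)) (a : Cr [n₁, n₂] × ℤ) :
    str n₁ n₂ h₁ h₂ (q ++ [a]) =
      if M n₁ n₂ h₁ h₂ a.1 ∈ (q ++ [a]).map Prod.fst then
        (if h : ∃ c : Cr [n₁, n₂], c ∉ (q ++ [a]).map Prod.fst then h.choose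
         else sp n₁ n₂ h₁ h₂ 0, 1)
      else (M n₁ n₂ h₁ h₂ a.1, eps n₁ n₂ a.1 * a.2) := by
  rw [str, List.getLast?_concat]
  rfl

/-- sum of the signs in syllable `i` -/
def Sm (i : Fin 2) (p : List (Cr [n₁, n₂] × ℤ)) : ℤ :=
  ((p.filter fun m => decide (m.1.1 = i)).map Prod.snd).sum

lemma Sm_nil (i : Fin 2) : Sm n₁ n₂ i [] = 0 := rfl

lemma Sm_append (i : Fin 2) (p q : List (Cr [n₁, n₂] × ℤ)) :
    Sm n₁ n₂ i (p ++ q) = Sm n₁ n₂ i p + Sm n₁ n₂ i q := by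
  simp [Sm]

lemma Sm_pair (c d : Cr [n₁, n₂]) (s t : ℤ) (i : Fin 2) :
    Sm n₁ n₂ i [(c, s), (d, t)] =
      (if c.1 = i then s else 0) + (if d.1 = i then t else 0) := by
  by_cases hc : c.1 = i <;> by_cases hd : d.1 = i <;> simp [Sm, hc, hd]

lemma legal_append_left {C : Type*} (p q : List (C × ℤ)) (h : LegalPlay (p ++ q)) :
    LegalPlay p := by
  constructor
  · have := h.1
    rw [List.map_append] at this
    exact (List.nodup_append.mp this).1
  · exact fun m hm => h.2 m (List.mem_append_left _ hm)

lemma follows_append_left {C : Type*} (par : ℕ) (σ : List (C × ℤ) → C × ℤ)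
    (p q : List (C × ℤ)) (h : Follows par σ (p ++ q)) : Follows par σ p := by
  intro i hi hpar
  have hi' : i < (p ++ q).length := by
    rw [List.length_append]; omega
  have := h i hi' hpar
  rw [List.get_eq_getElem, List.getElem_append_left] at this
  rw [List.take_append_of_le_length (le_of_lt hi)] at this
  exact this

end S10

namespace S10

variable (n₁ n₂ : ℕ) (h₁ : Odd n₁) (h₂ : Odd n₂)

lemma inv_main (k : ℕ) :
    ∀ p : List (Cr [n₁, n₂] × ℤ), p.length = 2 * k → LegalPlay p →
      Follows 1 (str n₁ n₂ h₁ h₂) p →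
      ((∀ c ∈ p.map Prod.fst, M n₁ n₂ h₁ h₂ c ∈ p.map Prod.fst) ∧
        Sm n₁ n₂ 0 p = Sm n₁ n₂ 1 p ∧
        ((sp n₁ n₂ h₁ h₂ 0 ∉ p.map Prod.fst ∧ Sm n₁ n₂ 0 p = 0) ∨
         (sp n₁ n₂ h₁ h₂ 0 ∈ p.map Prod.fst ∧ (Sm n₁ n₂ 0 p = 1 ∨ Sm n₁ n₂ 0 p = -1)))) := by
  induction k with
  | zero =>
    intro p hlen _ _
    rw [List.length_eq_zero_iff] at hlen
    subst hlen
    refine ⟨by simp, rfl, Or.inl ⟨by simp, rfl⟩⟩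
  | succ k ih =>
    intro p hlen hleg hfol
    -- decompose p = q ++ [a, b]
    rcases List.eq_nil_or_concat p with rfl | ⟨p', b, rfl⟩
    · simp at hlen
    rcases List.eq_nil_or_concat p' with rfl | ⟨q, a, rfl⟩
    · simp at hlen; omega
    simp only [List.concat_eq_append] at hlen hleg hfol ⊢
    have hp : q ++ [a] ++ [b] = q ++ [a, b] := by simp
    rw [hp] at hlen hleg hfol ⊢
    have hlenq : q.length = 2 * k := by simp at hlen; omega
    have hlegq : LegalPlay q := legal_append_left q [a, b] hleg
    have hfolq : Follows 1 (str n₁ n₂ h₁ h₂) q := follows_append_left 1 _ q [a, b] hfol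
    obtain ⟨hcl, hsum, hsp⟩ := ih q hlenq hlegq hfolq
    -- nodup facts
    have hnd : ((q ++ [a, b]).map Prod.fst).Nodup := hleg.1
    rw [List.map_append, List.nodup_append] at hnd
    have hand : a.1 ∉ q.map Prod.fst := fun h => hnd.2.2 _ h a.1 (by simp) rfl
    have hbnd : b.1 ∉ q.map Prod.fst := fun h => hnd.2.2 _ h b.1 (by simp) rfl
    have habd : a.1 ≠ b.1 := by
      have := hnd.2.1
      simp at this
      exact this
    -- determine b from the strategy
    have hidx : 2 * k + 1 < (q ++ [a, b]).length := by simp at hlen ⊢; omega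
    have hb0 := hfol (2 * k + 1) hidx (by omega)
    have hget : (q ++ [a, b]).get ⟨2 * k + 1, hidx⟩ = b := by
      rw [List.get_eq_getElem, List.getElem_append_right (by omega : q.length ≤ 2 * k + 1)]
      have h1 : 2 * k + 1 - q.length = 1 := by omega
      simp [h1]
    have htake : (q ++ [a, b]).take (2 * k + 1) = q ++ [a] := by
      rw [← hp, List.take_left' (by simp [hlenq])]
    rw [hget, htake, str_concat] at hb0
    have hMa : M n₁ n₂ h₁ h₂ a.1 ∉ (q ++ [a]).map Prod.fst := by
      simp only [List.map_append, List.mem_append]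
      rintro (h | h)
      · have := hcl _ h
        rw [M_invol] at this
        exact hand this
      · simp at h
        exact M_ne a.1 h
    rw [if_neg hMa] at hb0
    have hb1 : b.1 = M n₁ n₂ h₁ h₂ a.1 := by rw [hb0]
    have hb2 : b.2 = eps n₁ n₂ a.1 * a.2 := by rw [hb0]
    -- a's sign is ±1
    have ha2 : a.2 = 1 ∨ a.2 = -1 := hleg.2 a (by simp)
    -- sums split
    have hS0 : Sm n₁ n₂ 0 (q ++ [a, b]) = Sm n₁ n₂ 0 q + Sm n₁ n₂ 0 [a, b] :=
      Sm_append n₁ n₂ 0 q [a, b]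
    have hS1 : Sm n₁ n₂ 1 (q ++ [a, b]) = Sm n₁ n₂ 1 q + Sm n₁ n₂ 1 [a, b] :=
      Sm_append n₁ n₂ 1 q [a, b]
    have hpair : ∀ i : Fin 2, Sm n₁ n₂ i [a, b] =
        (if a.1.1 = i then a.2 else 0) + (if b.1.1 = i then b.2 else 0) := by
      intro i
      have : [a, b] = [(a.1, a.2), (b.1, b.2)] := by simp
      rw [this, Sm_pair]
    -- closure of the new position
    have hclosure : ∀ c ∈ (q ++ [a, b]).map Prod.fst,
        M n₁ n₂ h₁ h₂ c ∈ (q ++ [a, b]).map Prod.fst := by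
      intro c hc
      simp only [List.map_append, List.mem_append] at hc ⊢
      rcases hc with hc | hc
      · exact Or.inl (hcl c hc)
      · simp at hc
        rcases hc with rfl | rfl
        · refine Or.inr ?_
          simp [hb1]
        · refine Or.inr ?_
          rw [hb1, M_invol]
          simp
    have hfin2 : ∀ i : Fin 2, i = 0 ∨ i = 1 := by
      rintro ⟨v, hv⟩
      interval_cases v
      · exact Or.inl rfl
      · exact Or.inr rfl
    by_cases hsA : (a.1.2 : ℕ) = NN n₁ n₂ a.1.1 - 1
    · -- a's crossing is special
      have hepsv : eps n₁ n₂ a.1 = 1 := if_pos hsA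
      have haspv : a.1 = sp n₁ n₂ h₁ h₂ a.1.1 := spec_eq_sp hsA
      have hbspv : b.1 = sp n₁ n₂ h₁ h₂ (other a.1.1) := by rw [hb1, M_spec hsA]
      have hb2' : b.2 = a.2 := by rw [hb2, hepsv, one_mul]
      have hsp0mem : sp n₁ n₂ h₁ h₂ 0 = a.1 ∨ sp n₁ n₂ h₁ h₂ 0 = b.1 := by
        rcases hfin2 a.1.1 with hj | hj
        · left; rw [haspv, hj]
        · right; rw [hbspv, hj]; rfl
      have hsq0 : Sm n₁ n₂ 0 q = 0 := by
        rcases hsp with ⟨_, h0⟩ | ⟨hmem, _⟩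
        · exact h0
        · exfalso
          rcases hsp0mem with h | h
          · exact hand (h ▸ hmem)
          · exact hbnd (h ▸ hmem)
      have hsq1 : Sm n₁ n₂ 1 q = 0 := by rw [← hsum]; exact hsq0
      have hb11 : b.1.1 = other a.1.1 := by rw [hbspv]; rfl
      have hpv : ∀ i : Fin 2, Sm n₁ n₂ i [a, b] = a.2 := by
        intro i
        rw [hpair i, hb11, hb2']
        rcases hfin2 a.1.1 with hj | hj <;> rw [hj] <;> rcases hfin2 i with hi | hi <;>
          rw [hi] <;> simp [other]
      refine ⟨hclosure, ?_, Or.inr ⟨?_, ?_⟩⟩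
      · rw [hS0, hS1, hpv, hpv, hsq0, hsq1]
      · simp only [List.map_append, List.mem_append]
        right
        rcases hsp0mem with h | h
        · rw [h]; simp
        · rw [h]; simp
      · rw [hS0, hpv, hsq0, zero_add]
        exact ha2
    · -- a's crossing is not special
      have hepsv : eps n₁ n₂ a.1 = -1 := if_neg hsA
      have hb2' : b.2 = -a.2 := by rw [hb2, hepsv]; ring
      have hb11 : b.1.1 = a.1.1 := by rw [hb1, M_nonspec_fst hsA]
      have hpv : ∀ i : Fin 2, Sm n₁ n₂ i [a, b] = 0 := by
        intro i
        rw [hpair i, hb11, hb2']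
        by_cases hj : a.1.1 = i <;> simp [hj]
      have hanes : a.1 ≠ sp n₁ n₂ h₁ h₂ 0 := by
        intro h
        exact hsA (by rw [h]; rfl)
      have hbnes : b.1 ≠ sp n₁ n₂ h₁ h₂ 0 := by
        intro h
        have hbs := M_nonspec_isnonspec (h₁ := h₁) (h₂ := h₂) hsA
        rw [← hb1] at hbs
        exact hbs (by rw [h]; rfl)
      have hmemiff : (sp n₁ n₂ h₁ h₂ 0 ∈ (q ++ [a, b]).map Prod.fst) ↔
          sp n₁ n₂ h₁ h₂ 0 ∈ q.map Prod.fst := by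
        simp only [List.map_append, List.mem_append]
        constructor
        · rintro (h | h)
          · exact h
          · exfalso
            simp at h
            rcases h with h | h
            · exact hanes h.symm
            · exact hbnes h.symm
        · exact Or.inl
      refine ⟨hclosure, ?_, ?_⟩
      · rw [hS0, hS1, hpv, hpv, hsum]
      · rw [hS0, hpv, add_zero]
        rcases hsp with ⟨hm, hv⟩ | ⟨hm, hv⟩
        · exact Or.inl ⟨fun h => hm (hmemiff.mp h), hv⟩
        · exact Or.inr ⟨hmemiff.mpr hm, hv⟩

end S10

namespace S10

variable (n₁ n₂ : ℕ) (h₁ : Odd n₁) (h₂ : Odd n₂)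

lemma card_Cr : Fintype.card (Cr [n₁, n₂]) = n₁ + n₂ := by
  simp [Fintype.card_sigma, Fin.sum_univ_two]

lemma exists_fresh (p : List (Cr [n₁, n₂] × ℤ)) (hnd : (p.map Prod.fst).Nodup)
    (hlt : p.length < Fintype.card (Cr [n₁, n₂])) :
    ∃ c : Cr [n₁, n₂], c ∉ p.map Prod.fst := by
  by_contra h
  push_neg at h
  have hsub : (Finset.univ : Finset (Cr [n₁, n₂])) ⊆ (p.map Prod.fst).toFinset :=
    fun c _ => List.mem_toFinset.mpr (h c)
  have := Finset.card_le_card hsub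
  rw [List.toFinset_card_of_nodup hnd, Finset.card_univ, List.length_map] at this
  omega

lemma str_legal : LegalStrat 1 (str n₁ n₂ h₁ h₂) := by
  intro p hleg hpar hlt
  have hne : p ≠ [] := by
    intro h; subst h; simp at hpar
  rcases List.eq_nil_or_concat p with rfl | ⟨q, m, rfl⟩
  · exact absurd rfl hne
  simp only [List.concat_eq_append] at *
  rw [str_concat]
  by_cases hmem : M n₁ n₂ h₁ h₂ m.1 ∈ (q ++ [m]).map Prod.fst
  · rw [if_pos hmem]
    have hex : ∃ c : Cr [n₁, n₂], c ∉ (q ++ [m]).map Prod.fst :=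
      exists_fresh n₁ n₂ _ hleg.1 hlt
    rw [dif_pos hex]
    exact ⟨hex.choose_spec, Or.inl rfl⟩
  · rw [if_neg hmem]
    refine ⟨hmem, ?_⟩
    have hm2 : m.2 = 1 ∨ m.2 = -1 := hleg.2 m (by simp)
    have he : eps n₁ n₂ m.1 = 1 ∨ eps n₁ n₂ m.1 = -1 := by
      rw [eps]; split
      · exact Or.inl rfl
      · exact Or.inr rfl
    rcases hm2 with h2 | h2 <;> rcases he with he | he <;> rw [he, h2] <;> norm_num

lemma result_eq (p : List (Cr [n₁, n₂] × ℤ)) :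
    result [n₁, n₂] p = [Sm n₁ n₂ 0 p, Sm n₁ n₂ 1 p] := rfl

end S10


/-- in the resolution game on `(n_1, n_2)` with `n_1, n_2` odd, the second
player can force the resulting word to lie in `{(1, 1), (-1, -1)}`. -/
theorem second_forces_equal_ones (n₁ n₂ : ℕ) (h₁ : Odd n₁) (h₂ : Odd n₂) :
    CanForce (C := Cr [n₁, n₂]) 1 (fun p =>
      result [n₁, n₂] p = [1, 1] ∨ result [n₁, n₂] p = [-1, -1]) := by
  refine ⟨S10.str n₁ n₂ h₁ h₂, S10.str_legal n₁ n₂ h₁ h₂, ?_⟩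
  intro p hleg hlen hfol
  have ho1 : n₁ % 2 = 1 := Nat.odd_iff.mp h₁
  have ho2 : n₂ % 2 = 1 := Nat.odd_iff.mp h₂
  have hcard : Fintype.card (Cr [n₁, n₂]) = n₁ + n₂ := S10.card_Cr n₁ n₂
  have hlen' : p.length = 2 * ((n₁ + n₂) / 2) := by omega
  obtain ⟨hcl, hsum, hsp⟩ := S10.inv_main n₁ n₂ h₁ h₂ ((n₁ + n₂) / 2) p hlen' hleg hfol
  have hall : ∀ c : Cr [n₁, n₂], c ∈ p.map Prod.fst := by
    have huniv : (p.map Prod.fst).toFinset = Finset.univ := by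
      apply Finset.eq_univ_of_card
      rw [List.toFinset_card_of_nodup hleg.1, List.length_map, hlen, hcard]
    intro c
    exact List.mem_toFinset.mp (huniv ▸ Finset.mem_univ c)
  rcases hsp with ⟨hm, _⟩ | ⟨_, hv⟩
  · exact absurd (hall _) hm
  rw [S10.result_eq, ← hsum]
  rcases hv with hv | hv <;> rw [hv] <;> simp
end

section
/- Let n_1 and n_2 be odd natural numbers. In the resolution game on (n_1, n_2), the second player can force the resulting word (s_1, s_2) to lie in {(1, −1), (−1, 1)}. -/
section Pairing

open Classical in
noncomputable def pairFb {C : Type*} [Nonempty C] (p : List (C × ℤ)) : C × ℤ :=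
  if h : ∃ c : C, c ∉ p.map Prod.fst then (h.choose, 1) else (Classical.arbitrary C, 1)

open Classical in
noncomputable def pairStrat {C : Type*} [Nonempty C] (π : C → C)
    (p : List (C × ℤ)) : C × ℤ :=
  p.getLast?.elim (pairFb p)
    (fun m => if π m.1 ∈ p.map Prod.fst then pairFb p else (π m.1, -m.2))

lemma pairFb_spec {C : Type*} [Fintype C] [Nonempty C] (p : List (C × ℤ))
    (hlt : p.length < Fintype.card C) :
    (pairFb p).1 ∉ p.map Prod.fst ∧ (pairFb p).2 = 1 := by
  classical
  have h : ∃ c : C, c ∉ p.map Prod.fst := by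
    by_contra hc
    push_neg at hc
    have h1 : (p.map Prod.fst).toFinset = Finset.univ :=
      Finset.eq_univ_iff_forall.2 fun c => List.mem_toFinset.2 (hc c)
    have h2 := List.toFinset_card_le (p.map Prod.fst)
    rw [h1, Finset.card_univ] at h2
    simp only [List.length_map] at h2
    omega
  constructor
  · simp only [pairFb, dif_pos h]; exact h.choose_spec
  · simp only [pairFb]; rw [dif_pos h]

lemma pair_force {C : Type*} [Fintype C] [Nonempty C] (π : C → C)
    (hinv : ∀ c, π (π c) = c) (hnf : ∀ c, π c ≠ c)
    (hcard : Fintype.card C % 2 = 0) :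
    CanForce (C := C) 1 (fun p => ∀ m ∈ p, (π m.1, -m.2) ∈ p) := by
  classical
  refine ⟨pairStrat π, ?_, ?_⟩
  · intro p hp hpar hlt
    obtain ⟨q, m, rfl⟩ : ∃ q m, p = q ++ [m] := by
      rcases List.eq_nil_or_concat p with h | ⟨q, m, h⟩
      · rw [h] at hpar; simp at hpar
      · exact ⟨q, m, by rw [h, List.concat_eq_append]⟩
    have hm : m ∈ q ++ [m] := by simp
    rw [pairStrat, List.getLast?_concat, Option.elim]
    by_cases hmem : π m.1 ∈ (q ++ [m]).map Prod.fst
    · rw [if_pos hmem]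
      have := pairFb_spec (q ++ [m]) hlt
      exact ⟨this.1, Or.inl this.2⟩
    · rw [if_neg hmem]
      refine ⟨hmem, ?_⟩
      rcases hp.2 m hm with h | h
      · right; rw [h]
      · left; rw [h]; ring
  · intro p hp hlen hf
    have hnd := hp.1
    have key : ∀ i, i % 2 = 0 → i ≤ p.length →
        ∀ m ∈ p.take i, (π m.1, -m.2) ∈ p.take i := by
      intro i
      induction i using Nat.strong_induction_on with
      | _ i ih =>
        match i with
        | 0 => intro _ _ m hm; simp at hm
        | 1 => intro h; omega
        | (k+2) =>
          intro hpar hle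
          have hk1 : k < p.length := by omega
          have hk2 : k + 1 < p.length := by omega
          have hIH := ih k (by omega) (by omega) (by omega)
          set a := p.get ⟨k, hk1⟩ with ha
          set b := p.get ⟨k+1, hk2⟩ with hbdef
          have htake1 : p.take (k+1) = p.take k ++ [a] := by
            rw [List.take_succ, List.getElem?_eq_getElem hk1]
            simp [ha, List.get_eq_getElem]
          have htake2 : p.take (k+2) = p.take k ++ [a, b] := by
            rw [show k + 2 = (k+1)+1 from rfl, List.take_succ,
              List.getElem?_eq_getElem hk2, htake1]
            simp [hbdef, List.get_eq_getElem]
          have hb : b = pairStrat π (p.take (k+1)) := hf (k+1) hk2 (by omega)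
          -- the fresh crossing a.1 is not among the first k crossings
          have hafresh : a.1 ∉ (p.take k).map Prod.fst := by
            intro hmem
            have hdis := List.disjoint_take_drop (l := p.map Prod.fst) hnd (le_refl k)
            have h1 : a.1 ∈ (p.map Prod.fst).take k := by
              rw [← List.map_take]; exact hmem
            have h2 : a.1 ∈ (p.map Prod.fst).drop k := by
              rw [← List.map_drop]
              have : a ∈ p.drop k := by
                rw [List.drop_eq_getElem_cons hk1]
                exact List.mem_cons_self
              exact List.mem_map.2 ⟨a, this, rfl⟩
            exact hdis h1 h2
          have hmem : π a.1 ∉ (p.take k ++ [a]).map Prod.fst := by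
            simp only [List.map_append, List.mem_append, List.map_cons, List.map_nil,
              List.mem_singleton, List.mem_cons]
            rintro (hq | hlast)
            · obtain ⟨m, hm, hm1⟩ := List.mem_map.1 hq
              have h3 := hIH m hm
              have h4 : π m.1 = a.1 := by rw [hm1, hinv]
              rw [h4] at h3
              exact hafresh (List.mem_map.2 ⟨(a.1, -m.2), h3, rfl⟩)
            · rcases hlast with hlast | hlast
              · exact hnf a.1 hlast
              · simp at hlast
          have hbval : b = (π a.1, -a.2) := by
            rw [hb, htake1, pairStrat, List.getLast?_concat, Option.elim, if_neg]
            exact hmem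
          rw [htake2]
          intro m hm
          rcases List.mem_append.1 hm with hm | hm
          · exact List.mem_append.2 (Or.inl (hIH m hm))
          · rcases List.mem_cons.1 hm with rfl | hm
            · refine List.mem_append.2 (Or.inr ?_)
              rw [← hbval]; simp
            · rcases List.mem_cons.1 hm with rfl | hm
              · refine List.mem_append.2 (Or.inr ?_)
                rw [hbval]
                simp [hinv]
              · simp at hm
    have := key p.length (by omega) (le_refl _)
    rwa [List.take_length] at this

end Pairing

section Swap

variable (n₁ n₂ : ℕ)

def swapPi (h₁ : 0 < n₁) (h₂ : 0 < n₂) : Cr [n₁, n₂] → Cr [n₁, n₂]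
  | ⟨⟨0, _⟩, j⟩ =>
      if hj : (j : ℕ) = 0 then ⟨⟨1, by norm_num⟩, ⟨0, h₂⟩⟩
      else ⟨⟨0, by norm_num⟩, ⟨n₁ - (j : ℕ),
        show n₁ - (j : ℕ) < n₁ from by have hlt : (j : ℕ) < n₁ := j.isLt; omega⟩⟩
  | ⟨⟨1, _⟩, j⟩ =>
      if hj : (j : ℕ) = 0 then ⟨⟨0, by norm_num⟩, ⟨0, h₁⟩⟩
      else ⟨⟨1, by norm_num⟩, ⟨n₂ - (j : ℕ),
        show n₂ - (j : ℕ) < n₂ from by have hlt : (j : ℕ) < n₂ := j.isLt; omega⟩⟩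
  | ⟨⟨k+2, hk⟩, _⟩ => absurd hk (by simp)

variable (h₁ : 0 < n₁) (h₂ : 0 < n₂)

lemma swapPi_left_zero (hi : 0 < [n₁, n₂].length) (j : Fin ([n₁, n₂].get ⟨0, hi⟩))
    (hj : (j : ℕ) = 0) :
    swapPi n₁ n₂ h₁ h₂ ⟨⟨0, hi⟩, j⟩ = ⟨⟨1, by norm_num⟩, ⟨0, h₂⟩⟩ := by
  simp only [swapPi]; rw [dif_pos hj]

lemma swapPi_left_pos (hi : 0 < [n₁, n₂].length) (j : Fin ([n₁, n₂].get ⟨0, hi⟩))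
    (hj : ¬ ((j : ℕ) = 0)) :
    swapPi n₁ n₂ h₁ h₂ ⟨⟨0, hi⟩, j⟩ = ⟨⟨0, by norm_num⟩, ⟨n₁ - (j : ℕ),
      show n₁ - (j : ℕ) < n₁ from by have hlt : (j : ℕ) < n₁ := j.isLt; omega⟩⟩ := by
  simp only [swapPi]; rw [dif_neg hj]

lemma swapPi_right_zero (hi : 1 < [n₁, n₂].length) (j : Fin ([n₁, n₂].get ⟨1, hi⟩))
    (hj : (j : ℕ) = 0) :
    swapPi n₁ n₂ h₁ h₂ ⟨⟨1, hi⟩, j⟩ = ⟨⟨0, by norm_num⟩, ⟨0, h₁⟩⟩ := by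
  simp only [swapPi]; rw [dif_pos hj]

lemma swapPi_right_pos (hi : 1 < [n₁, n₂].length) (j : Fin ([n₁, n₂].get ⟨1, hi⟩))
    (hj : ¬ ((j : ℕ) = 0)) :
    swapPi n₁ n₂ h₁ h₂ ⟨⟨1, hi⟩, j⟩ = ⟨⟨1, by norm_num⟩, ⟨n₂ - (j : ℕ),
      show n₂ - (j : ℕ) < n₂ from by have hlt : (j : ℕ) < n₂ := j.isLt; omega⟩⟩ := by
  simp only [swapPi]; rw [dif_neg hj]

lemma swapPi_invol (c : Cr [n₁, n₂]) : swapPi n₁ n₂ h₁ h₂ (swapPi n₁ n₂ h₁ h₂ c) = c := by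
  obtain ⟨⟨i, hi⟩, j⟩ := c
  match i, hi with
  | 0, hi =>
    by_cases hj : (j : ℕ) = 0
    · rw [swapPi_left_zero n₁ n₂ h₁ h₂ hi j hj, swapPi_right_zero n₁ n₂ h₁ h₂ _ _ rfl]
      exact Sigma.ext rfl (heq_of_eq (Fin.ext hj.symm))
    · have hlt : (j : ℕ) < n₁ := j.isLt
      rw [swapPi_left_pos n₁ n₂ h₁ h₂ hi j hj,
        swapPi_left_pos n₁ n₂ h₁ h₂ _ _ (by simp; omega)]
      exact Sigma.ext rfl (heq_of_eq (Fin.ext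
        (show n₁ - (n₁ - (j : ℕ)) = (j : ℕ) by omega)))
  | 1, hi =>
    by_cases hj : (j : ℕ) = 0
    · rw [swapPi_right_zero n₁ n₂ h₁ h₂ hi j hj, swapPi_left_zero n₁ n₂ h₁ h₂ _ _ rfl]
      exact Sigma.ext rfl (heq_of_eq (Fin.ext hj.symm))
    · have hlt : (j : ℕ) < n₂ := j.isLt
      rw [swapPi_right_pos n₁ n₂ h₁ h₂ hi j hj,
        swapPi_right_pos n₁ n₂ h₁ h₂ _ _ (by simp; omega)]
      exact Sigma.ext rfl (heq_of_eq (Fin.ext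
        (show n₂ - (n₂ - (j : ℕ)) = (j : ℕ) by omega)))

lemma swapPi_ne (h₁o : Odd n₁) (h₂o : Odd n₂) (c : Cr [n₁, n₂]) :
    swapPi n₁ n₂ h₁ h₂ c ≠ c := by
  obtain ⟨⟨i, hi⟩, j⟩ := c
  match i, hi with
  | 0, hi =>
    by_cases hj : (j : ℕ) = 0
    · rw [swapPi_left_zero n₁ n₂ h₁ h₂ hi j hj]
      intro h
      have := congrArg (fun x : Cr [n₁, n₂] => (x.1 : ℕ)) h
      simp at this
    · have hlt : (j : ℕ) < n₁ := j.isLt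
      rw [swapPi_left_pos n₁ n₂ h₁ h₂ hi j hj]
      intro h
      have := congrArg (fun x : Cr [n₁, n₂] => (x.2 : ℕ)) h
      simp only at this
      obtain ⟨t, ht⟩ := h₁o
      omega
  | 1, hi =>
    by_cases hj : (j : ℕ) = 0
    · rw [swapPi_right_zero n₁ n₂ h₁ h₂ hi j hj]
      intro h
      have := congrArg (fun x : Cr [n₁, n₂] => (x.1 : ℕ)) h
      simp at this
    · have hlt : (j : ℕ) < n₂ := j.isLt
      rw [swapPi_right_pos n₁ n₂ h₁ h₂ hi j hj]
      intro h
      have := congrArg (fun x : Cr [n₁, n₂] => (x.2 : ℕ)) h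
      simp only at this
      obtain ⟨t, ht⟩ := h₂o
      omega

lemma card_Cr : Fintype.card (Cr [n₁, n₂]) = n₁ + n₂ := by
  rw [Fintype.card_sigma]
  show ∑ i : Fin 2, Fintype.card (Fin ([n₁, n₂].get i)) = n₁ + n₂
  rw [Fin.sum_univ_two]
  simp

end Swap

/-- in the resolution game on `(n_1, n_2)` with `n_1, n_2` odd, the second
player can force the resulting word to lie in `{(1, -1), (-1, 1)}`. -/
theorem second_forces_opposite_ones (n₁ n₂ : ℕ) (h₁ : Odd n₁) (h₂ : Odd n₂) :
    CanForce (C := Cr [n₁, n₂]) 1 (fun p =>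
      result [n₁, n₂] p = [1, -1] ∨ result [n₁, n₂] p = [-1, 1]) := by
  classical
  have h₁p : 0 < n₁ := h₁.pos
  have h₂p : 0 < n₂ := h₂.pos
  haveI : Nonempty (Cr [n₁, n₂]) := ⟨⟨⟨0, by norm_num⟩, ⟨0, h₁p⟩⟩⟩
  set π := swapPi n₁ n₂ h₁p h₂p with hπ
  have hcard : Fintype.card (Cr [n₁, n₂]) = n₁ + n₂ := card_Cr n₁ n₂
  obtain ⟨σ, hσ, hP⟩ := pair_force π (swapPi_invol n₁ n₂ h₁p h₂p)
    (swapPi_ne n₁ n₂ h₁p h₂p h₁ h₂)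
    (by obtain ⟨a, ha⟩ := h₁; obtain ⟨b, hb⟩ := h₂; omega)
  refine ⟨σ, hσ, ?_⟩
  intro p hp hlen hf
  have hcl := hP p hp hlen hf
  -- the sign function of the complete play
  have h2 : (p.map Prod.fst).toFinset = Finset.univ := by
    apply Finset.eq_univ_of_card
    rw [List.toFinset_card_of_nodup hp.1]
    simp [hlen]
  have hall : ∀ c : Cr [n₁, n₂], c ∈ p.map Prod.fst := by
    intro c
    rw [← List.mem_toFinset, h2]
    exact Finset.mem_univ c
  have hg : ∀ c : Cr [n₁, n₂], ∃ ε : ℤ, (c, ε) ∈ p := by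
    intro c
    obtain ⟨m, hm, hm1⟩ := List.mem_map.1 (hall c)
    exact ⟨m.2, by rw [← hm1]; simpa using hm⟩
  choose g hgmem using hg
  have huniq : ∀ m ∈ p, m.2 = g m.1 := by
    intro m hm
    have := List.inj_on_of_nodup_map hp.1 hm (hgmem m.1) rfl
    exact congrArg Prod.snd this
  have hsign : ∀ c, g c = 1 ∨ g c = -1 := fun c => hp.2 _ (hgmem c)
  have hflip : ∀ c, g (π c) = - g c := by
    intro c
    have h3 := hcl (c, g c) (hgmem c)
    exact (huniq _ h3).symm
  -- the syllable sums via the sign function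
  have e1 : ∀ (q : List (Cr [n₁, n₂] × ℤ)) (i : Fin ([n₁, n₂].length)),
      (∀ m ∈ q, m.2 = g m.1) →
      (q.filter fun m => decide (m.1.1 = i)).map Prod.snd
        = ((q.map Prod.fst).filter (fun c => decide (c.1 = i))).map g := by
    intro q i hq
    induction q with
    | nil => simp
    | cons m q ih =>
      have hm2 := hq m (by simp)
      have ih' := ih fun x hx => hq x (by simp [hx])
      by_cases hc : m.1.1 = i
      · simp [List.filter_cons, hc, hm2, ih']
      · simp [List.filter_cons, hc, ih']
  have hsum : ∀ i : Fin ([n₁, n₂].length),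
      ((p.filter fun m => decide (m.1.1 = i)).map Prod.snd).sum
        = ∑ j : Fin ([n₁, n₂].get i), g ⟨i, j⟩ := by
    intro i
    rw [e1 p i huniq]
    rw [← List.sum_toFinset g ((hp.1).filter _)]
    rw [List.toFinset_filter, h2]
    have : Finset.filter (fun x : Cr [n₁, n₂] => decide (x.1 = i) = true) Finset.univ
        = Finset.filter (fun x : Cr [n₁, n₂] => x.1 = i) Finset.univ := by
      apply Finset.filter_congr
      intro x _
      simp
    rw [this, Finset.sum_filter, ← Finset.univ_sigma_univ, Finset.sum_sigma]
    have step : ∀ i' : Fin ([n₁, n₂].length),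
        (∑ j : Fin ([n₁, n₂].get i'), if (⟨i', j⟩ : Cr [n₁, n₂]).1 = i then g ⟨i', j⟩ else 0)
          = if i' = i then (∑ j : Fin ([n₁, n₂].get i'), g ⟨i', j⟩) else 0 := by
      intro i'
      by_cases h : i' = i
      · subst h; simp
      · simp [h]
    rw [Finset.sum_congr rfl fun i' _ => step i']
    rw [Finset.sum_ite_eq' Finset.univ i
      (fun i' => ∑ j : Fin ([n₁, n₂].get i'), g ⟨i', j⟩)]
    simp
  -- kill the paired crossings within each syllable
  set i0 : Fin ([n₁, n₂].length) := ⟨0, by norm_num⟩ with hi0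
  set i1 : Fin ([n₁, n₂].length) := ⟨1, by norm_num⟩ with hi1
  set z0 : Fin ([n₁, n₂].get i0) := ⟨0, h₁p⟩ with hz0
  set z1 : Fin ([n₁, n₂].get i1) := ⟨0, h₂p⟩ with hz1
  have hsyl0 : (∑ j : Fin ([n₁, n₂].get i0), g ⟨i0, j⟩) = g ⟨i0, z0⟩ := by
    rw [← Finset.sum_erase_add _ _ (Finset.mem_univ z0)]
    have hzero : ∑ j ∈ Finset.univ.erase z0, g ⟨i0, j⟩ = 0 := by
      refine Finset.sum_involution
        (fun (j : Fin ([n₁, n₂].get i0)) (hj : j ∈ Finset.univ.erase z0) =>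
          (⟨n₁ - (j : ℕ), show n₁ - (j : ℕ) < n₁ from by
            have hlt : (j : ℕ) < n₁ := j.isLt
            have hne : (j : ℕ) ≠ 0 := fun h0 => (Finset.mem_erase.1 hj).1 (Fin.ext h0)
            omega⟩ : Fin ([n₁, n₂].get i0))) ?_ ?_ ?_ ?_
      · intro j hj
        have hjne : (j : ℕ) ≠ 0 := by
          intro h0
          exact (Finset.mem_erase.1 hj).1 (Fin.ext h0)
        have hπj : π ⟨i0, j⟩ = ⟨i0, ⟨n₁ - (j : ℕ), show n₁ - (j : ℕ) < n₁ from by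
            have hlt : (j : ℕ) < n₁ := j.isLt; omega⟩⟩ :=
          swapPi_left_pos n₁ n₂ h₁p h₂p _ j hjne
        have := hflip ⟨i0, j⟩
        rw [hπj] at this
        rw [this]; ring
      · intro j hj _
        have hjne : (j : ℕ) ≠ 0 := fun h0 => (Finset.mem_erase.1 hj).1 (Fin.ext h0)
        have hlt : (j : ℕ) < n₁ := j.isLt
        intro heq
        have h5 : n₁ - (j : ℕ) = (j : ℕ) := congrArg Fin.val heq
        obtain ⟨t, ht⟩ := h₁
        omega
      · intro j hj
        have hjne : (j : ℕ) ≠ 0 := fun h0 => (Finset.mem_erase.1 hj).1 (Fin.ext h0)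
        have hlt : (j : ℕ) < n₁ := j.isLt
        refine Finset.mem_erase.2 ⟨?_, Finset.mem_univ _⟩
        intro heq
        have h5 : n₁ - (j : ℕ) = 0 := congrArg Fin.val heq
        omega
      · intro j hj
        have hjne : (j : ℕ) ≠ 0 := fun h0 => (Finset.mem_erase.1 hj).1 (Fin.ext h0)
        have hlt : (j : ℕ) < n₁ := j.isLt
        refine Fin.ext ?_
        show n₁ - (n₁ - (j : ℕ)) = (j : ℕ)
        omega
    rw [hzero, zero_add]
  have hsyl1 : (∑ j : Fin ([n₁, n₂].get i1), g ⟨i1, j⟩) = g ⟨i1, z1⟩ := by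
    rw [← Finset.sum_erase_add _ _ (Finset.mem_univ z1)]
    have hzero : ∑ j ∈ Finset.univ.erase z1, g ⟨i1, j⟩ = 0 := by
      refine Finset.sum_involution
        (fun (j : Fin ([n₁, n₂].get i1)) (hj : j ∈ Finset.univ.erase z1) =>
          (⟨n₂ - (j : ℕ), show n₂ - (j : ℕ) < n₂ from by
            have hlt : (j : ℕ) < n₂ := j.isLt
            have hne : (j : ℕ) ≠ 0 := fun h0 => (Finset.mem_erase.1 hj).1 (Fin.ext h0)
            omega⟩ : Fin ([n₁, n₂].get i1))) ?_ ?_ ?_ ?_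
      · intro j hj
        have hjne : (j : ℕ) ≠ 0 := fun h0 => (Finset.mem_erase.1 hj).1 (Fin.ext h0)
        have hπj : π ⟨i1, j⟩ = ⟨i1, ⟨n₂ - (j : ℕ), show n₂ - (j : ℕ) < n₂ from by
            have hlt : (j : ℕ) < n₂ := j.isLt; omega⟩⟩ :=
          swapPi_right_pos n₁ n₂ h₁p h₂p _ j hjne
        have := hflip ⟨i1, j⟩
        rw [hπj] at this
        rw [this]; ring
      · intro j hj _
        have hjne : (j : ℕ) ≠ 0 := fun h0 => (Finset.mem_erase.1 hj).1 (Fin.ext h0)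
        have hlt : (j : ℕ) < n₂ := j.isLt
        intro heq
        have h5 : n₂ - (j : ℕ) = (j : ℕ) := congrArg Fin.val heq
        obtain ⟨t, ht⟩ := h₂
        omega
      · intro j hj
        have hjne : (j : ℕ) ≠ 0 := fun h0 => (Finset.mem_erase.1 hj).1 (Fin.ext h0)
        have hlt : (j : ℕ) < n₂ := j.isLt
        refine Finset.mem_erase.2 ⟨?_, Finset.mem_univ _⟩
        intro heq
        have h5 : n₂ - (j : ℕ) = 0 := congrArg Fin.val heq
        omega
      · intro j hj
        have hjne : (j : ℕ) ≠ 0 := fun h0 => (Finset.mem_erase.1 hj).1 (Fin.ext h0)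
        have hlt : (j : ℕ) < n₂ := j.isLt
        refine Fin.ext ?_
        show n₂ - (n₂ - (j : ℕ)) = (j : ℕ)
        omega
    rw [hzero, zero_add]
  -- the two leftover crossings have opposite signs
  have hopp : g ⟨i1, z1⟩ = - g ⟨i0, z0⟩ := by
    have hπ0 : π ⟨i0, z0⟩ = ⟨i1, z1⟩ := swapPi_left_zero n₁ n₂ h₁p h₂p _ z0 rfl
    have := hflip ⟨i0, z0⟩
    rwa [hπ0] at this
  -- compute the result
  have hfr : List.finRange ([n₁, n₂].length) = [i0, i1] := by
    have : [n₁, n₂].length = 2 := rfl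
    apply List.ext_getElem
    · simp
    · intro k hk1 hk2
      simp only [List.length_finRange] at hk1
      rw [this] at hk1
      interval_cases k
      · apply Fin.ext; simp [List.getElem_finRange, hi0, Fin.cast]
      · apply Fin.ext; simp [List.getElem_finRange, hi1, Fin.cast]
  have hres : result [n₁, n₂] p = [g ⟨i0, z0⟩, - g ⟨i0, z0⟩] := by
    rw [result, hfr]
    simp only [List.map_cons, List.map_nil]
    rw [hsum i0, hsum i1, hsyl0, hsyl1, hopp]
  rcases hsign ⟨i0, z0⟩ with h | h
  · left; rw [hres, h]
  · right; rw [hres, h]; norm_num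
end

section
/- Let k ≥ 3, let n_1 and n_k be odd natural numbers, and let n_i be even for all 1 < i < k. In the resolution game on (n_1, …, n_k), the second player can force the resulting word to satisfy s_1 = s_k ∈ {1, −1} and s_i = 0 for all 1 < i < k. -/
namespace ResGame

lemma getLastD_mem' {α : Type*} (l : List α) (d : α) (h : l ≠ []) : l.getLastD d ∈ l := by
  rw [List.getLastD_eq_getLast?, List.getLast?_eq_getLast h]
  exact List.getLast_mem h

lemma not_mem_take_self' {α : Type*} {l : List α} (h : l.Nodup) {m : ℕ} (hm : m < l.length) :
    l[m] ∉ l.take m := by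
  intro hmem
  have h2 : (l.take m ++ l.drop m).Nodup := by rw [List.take_append_drop]; exact h
  rw [List.nodup_append] at h2
  have hd : l[m] ∈ l.drop m := by
    have h0 : 0 < (l.drop m).length := by simp; omega
    have := List.getElem_mem h0
    rwa [List.getElem_drop] at this
  exact h2.2.2 _ hmem _ hd rfl

lemma mem_of_complete' {C : Type*} [Fintype C] [DecidableEq C] {l : List C} (hN : l.Nodup)
    (hlen : l.length = Fintype.card C) (c : C) : c ∈ l := by
  have h1 : l.toFinset = Finset.univ :=
    Finset.eq_univ_of_card _ (by rw [List.toFinset_card_of_nodup hN, hlen])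
  have := Finset.mem_univ c
  rw [← h1, List.mem_toFinset] at this
  exact this


def mate (j : ℕ) : ℕ := if j % 2 = 0 then j + 1 else j - 1

lemma mate_mate (j : ℕ) : mate (mate j) = j := by
  simp only [mate]; split <;> split <;> omega

lemma mate_ne (j : ℕ) : mate j ≠ j := by
  simp only [mate]; split <;> omega

variable {n : List ℕ}

def resp (f : Cr n → Cr n) (m : Cr n × ℤ) : Cr n × ℤ :=
  (f m.1, if (f m.1).1 = m.1.1 then -m.2 else m.2)

def Paired (f : Cr n → Cr n) (p : List (Cr n × ℤ)) : Prop :=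
  ∀ i : ℕ, p[2*i+1]? = (p[2*i]?).map (resp f)

def T (i : Fin n.length) (p : List (Cr n × ℤ)) : ℤ :=
  ((p.filter fun m => decide (m.1.1 = i)).map Prod.snd).sum

lemma T_cons (i : Fin n.length) (m : Cr n × ℤ) (p : List (Cr n × ℤ)) :
    T i (m :: p) = (if m.1.1 = i then m.2 else 0) + T i p := by
  by_cases h : m.1.1 = i <;> simp [T, List.filter_cons, h]

lemma paired_cons {f : Cr n → Cr n} {m0 m1 : Cr n × ℤ} {q : List (Cr n × ℤ)}
    (h : Paired f (m0 :: m1 :: q)) : m1 = resp f m0 ∧ Paired f q := by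
  constructor
  · have h0 := h 0
    simp at h0
    exact h0
  · intro i
    have hii := h (i+1)
    have e1 : 2*(i+1)+1 = (2*i+1)+1+1 := by ring
    have e2 : 2*(i+1) = (2*i)+1+1 := by ring
    rw [e1, e2, List.getElem?_cons_succ, List.getElem?_cons_succ,
      List.getElem?_cons_succ, List.getElem?_cons_succ] at hii
    exact hii

lemma getLastD_mem {α : Type*} (l : List α) (d : α) (h : l ≠ []) : l.getLastD d ∈ l := by
  rw [List.getLastD_eq_getLast?, List.getLast?_eq_getLast h]
  exact List.getLast_mem h

lemma not_mem_take_self {α : Type*} {l : List α} (h : l.Nodup) {m : ℕ} (hm : m < l.length) :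
    l[m] ∉ l.take m := by
  intro hmem
  have h2 : (l.take m ++ l.drop m).Nodup := by rw [List.take_append_drop]; exact h
  rw [List.nodup_append] at h2
  have hd : l[m] ∈ l.drop m := by
    have h0 : 0 < (l.drop m).length := by simp; omega
    have := List.getElem_mem h0
    rwa [List.getElem_drop] at this
  exact h2.2.2 _ hmem _ hd rfl

lemma mem_of_complete {C : Type*} [Fintype C] [DecidableEq C] {l : List C} (hN : l.Nodup)
    (hlen : l.length = Fintype.card C) (c : C) : c ∈ l := by
  have h1 : l.toFinset = Finset.univ :=
    Finset.eq_univ_of_card _ (by rw [List.toFinset_card_of_nodup hN, hlen])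
  have := Finset.mem_univ c
  rw [← h1, List.mem_toFinset] at this
  exact this

lemma sum_core (f : Cr n → Cr n) (a b : Cr n)
    (hf2 : ∀ c, f (f c) = c) (hfa : f a = b) (hab1 : a.1 ≠ b.1)
    (hsyll : ∀ c, c ≠ a → c ≠ b → (f c).1 = c.1) :
    ∀ (N : ℕ) (p : List (Cr n × ℤ)), p.length ≤ N → Paired f p → Even p.length →
      (p.map Prod.fst).Nodup → (∀ m ∈ p, m.2 = 1 ∨ m.2 = -1) →
      (a ∉ p.map Prod.fst ∧ ∀ i, T i p = 0) ∨
      (a ∈ p.map Prod.fst ∧ ∃ s : ℤ, (s = 1 ∨ s = -1) ∧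
        ∀ i, T i p = (if i = a.1 then s else 0) + (if i = b.1 then s else 0)) := by
  have hfb : f b = a := by rw [← hfa, hf2]
  intro N
  induction N with
  | zero =>
    intro p hlen _ _ _ _
    have hp : p = [] := List.length_eq_zero_iff.mp (by omega)
    subst hp; left; simp [T]
  | succ N ih =>
    intro p hlen hP hE hN hS
    rcases p with _ | ⟨m0, p⟩
    · left; simp [T]
    rcases p with _ | ⟨m1, q⟩
    · exfalso; rcases hE with ⟨t, ht⟩; simp at ht; omega
    obtain ⟨hm1, hq⟩ := paired_cons hP
    have hqE : Even q.length := by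
      rcases hE with ⟨t, ht⟩; simp at ht; exact ⟨t-1, by omega⟩
    simp only [List.map_cons, List.nodup_cons, List.mem_cons] at hN
    have hSq : ∀ m ∈ q, m.2 = 1 ∨ m.2 = -1 := fun m hm => hS m (by simp [hm])
    have hs0 : m0.2 = 1 ∨ m0.2 = -1 := hS m0 (by simp)
    have ihq := ih q (by simp at hlen; omega) hq hqE hN.2.2 hSq
    have iteswap : ∀ (x y : Fin n.length) (s : ℤ),
        (if x = y then s else 0) = (if y = x then s else 0) := by
      intro x y s
      by_cases h : x = y
      · simp [h]
      · simp [h, Ne.symm h]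
    by_cases hca : m0.1 = a
    · have hm1' : m1 = (b, m0.2) := by
        rw [hm1]; simp only [resp, hca, hfa]
        rw [if_neg (fun h => hab1 h.symm)]
      have haq : a ∉ q.map Prod.fst := by
        intro h
        exact hN.1 (by rw [hca]; exact Or.inr h)
      rcases ihq with ⟨_, hq0⟩ | ⟨hqa, _⟩
      · right
        refine ⟨by simp only [List.map_cons, List.mem_cons]; exact Or.inl hca.symm,
          m0.2, hs0, ?_⟩
        intro i
        rw [T_cons, T_cons, hq0 i, hm1', hca]
        rw [iteswap a.1 i, iteswap b.1 i]
        simp only []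
        ring
      · exact absurd hqa haq
    · by_cases hcb : m0.1 = b
      · have hm1' : m1 = (a, m0.2) := by
          rw [hm1]; simp only [resp, hcb, hfb]
          rw [if_neg hab1]
        have haq : a ∉ q.map Prod.fst := by
          intro h
          exact hN.2.1 (by rw [hm1']; exact h)
        rcases ihq with ⟨_, hq0⟩ | ⟨hqa, _⟩
        · right
          refine ⟨by simp [hm1'],
            m0.2, hs0, ?_⟩
          intro i
          rw [T_cons, T_cons, hq0 i, hm1', hcb]
          rw [iteswap a.1 i, iteswap b.1 i]
          simp only []
          ring
        · exact absurd hqa haq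
      · have hfca : f m0.1 ≠ a := fun h => hcb (by rw [← hf2 m0.1, h, hfa])
        have hfcb : f m0.1 ≠ b := fun h => hca (by rw [← hf2 m0.1, h, hfb])
        have hsame : (f m0.1).1 = m0.1.1 := hsyll _ hca hcb
        have hm1' : m1 = (f m0.1, -m0.2) := by rw [hm1]; simp only [resp, if_pos hsame]
        have hT : ∀ i, T i (m0 :: m1 :: q) = T i q := by
          intro i
          rw [T_cons, T_cons, hm1']
          by_cases h : m0.1.1 = i
          · rw [if_pos h, if_pos (show ((f m0.1, -m0.2).1).1 = i from hsame.trans h)]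
            ring
          · rw [if_neg h, if_neg (show ¬((f m0.1, -m0.2).1).1 = i from
              fun hh => h (hsame.symm.trans hh))]
            ring
        have hmem : a ∈ (m0 :: m1 :: q).map Prod.fst ↔ a ∈ q.map Prod.fst := by
          simp only [List.map_cons, List.mem_cons, hm1']
          constructor
          · rintro (h | h | h)
            · exact absurd h.symm hca
            · exact absurd h.symm hfca
            · exact h
          · exact fun h => Or.inr (Or.inr h)
        rcases ihq with ⟨h1', h2'⟩ | ⟨h1', s, hs, h2'⟩
        · left
          exact ⟨fun h => h1' (hmem.mp h), fun i => by rw [hT i]; exact h2' i⟩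
        · right
          exact ⟨hmem.mpr h1', s, hs, fun i => by rw [hT i]; exact h2' i⟩

theorem force_abstract (f : Cr n → Cr n) (a b : Cr n)
    (hf2 : ∀ c, f (f c) = c) (hfix : ∀ c, f c ≠ c) (hfa : f a = b)
    (hab1 : a.1 ≠ b.1) (hsyll : ∀ c, c ≠ a → c ≠ b → (f c).1 = c.1)
    (heven : Even (Fintype.card (Cr n))) :
    CanForce (C := Cr n) 1 (fun p => ∃ s : ℤ, (s = 1 ∨ s = -1) ∧
      ∀ i, T i p = (if i = a.1 then s else 0) + (if i = b.1 then s else 0)) := by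
  classical
  set σ : List (Cr n × ℤ) → Cr n × ℤ := fun p =>
    if f (p.getLastD (a,1)).1 ∈ p.map Prod.fst then
      (if h : ∃ c : Cr n, c ∉ p.map Prod.fst then (h.choose, 1) else ((a : Cr n), 1))
    else resp f (p.getLastD (a,1)) with hσ
  refine ⟨σ, ?_, ?_⟩
  · intro p hleg hpar hlt
    rw [hσ]
    simp only []
    by_cases hmem : f (p.getLastD (a,1)).1 ∈ p.map Prod.fst
    · rw [if_pos hmem]
      have hex : ∃ c : Cr n, c ∉ p.map Prod.fst := by
        by_contra hno
        push_neg at hno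
        have h1 : (p.map Prod.fst).toFinset = Finset.univ :=
          Finset.eq_univ_iff_forall.mpr (fun c => List.mem_toFinset.mpr (hno c))
        have h2 : (p.map Prod.fst).toFinset.card = p.length := by
          rw [List.toFinset_card_of_nodup hleg.1, List.length_map]
        rw [h1, Finset.card_univ] at h2
        omega
      rw [dif_pos hex]
      exact ⟨hex.choose_spec, Or.inl rfl⟩
    · rw [if_neg hmem]
      have hne : p ≠ [] := by intro h; subst h; simp at hpar
      have hm : p.getLastD (a,1) ∈ p := getLastD_mem' p _ hne
      have hs := hleg.2 _ hm
      refine ⟨hmem, ?_⟩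
      simp only [resp]
      split <;> rcases hs with h | h <;> rw [h] <;> norm_num
  · intro p hleg hlen hfol
    have hNodup : (p.map Prod.fst).Nodup := hleg.1
    have hEven : Even p.length := hlen ▸ heven
    have hstep : ∀ j : ℕ, (hj : 2*j+1 < p.length) →
        (∀ c ∈ (p.take (2*j)).map Prod.fst, f c ∈ (p.take (2*j)).map Prod.fst) →
        p[2*j+1] = resp f (p[2*j]'(by omega)) := by
      intro j hj hcl
      have hj0 : 2*j < p.length := by omega
      have htake : p.take (2*j+1) = p.take (2*j) ++ [p[2*j]] := by
        rw [List.take_succ, List.getElem?_eq_getElem hj0]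
        rfl
      have hlast : (p.take (2*j+1)).getLastD (a,1) = p[2*j] := by
        rw [htake, List.getLastD_concat]
      have hc0 : p[2*j].1 ∉ (p.take (2*j)).map Prod.fst := by
        rw [List.map_take]
        have he : (p.map Prod.fst)[2*j]'(by simpa using hj0) = p[2*j].1 := by
          simp
        rw [← he]
        exact not_mem_take_self' hNodup (by simpa using hj0)
      have hfc : f (p[2*j].1) ∉ (p.take (2*j+1)).map Prod.fst := by
        rw [htake]
        simp only [List.map_append, List.mem_append, List.map_cons, List.map_nil,
          List.mem_cons, List.not_mem_nil, or_false]
        rintro (h | h)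
        · exact hc0 (by have := hcl _ h; rwa [hf2] at this)
        · exact hfix _ h
      have hfl := hfol (2*j+1) hj (by omega)
      rw [List.get_eq_getElem] at hfl
      rw [hfl, hσ]
      simp only []
      rw [hlast, if_neg hfc]
    have hclosure : ∀ j : ℕ, 2*j ≤ p.length →
        ∀ c ∈ (p.take (2*j)).map Prod.fst, f c ∈ (p.take (2*j)).map Prod.fst := by
      intro j
      induction j with
      | zero => simp
      | succ j ih =>
        intro hj c hc
        have hj1 : 2*j+1 < p.length := by omega
        have hj0 : 2*j < p.length := by omega
        have hcl := ih (by omega)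
        have hp1 := hstep j hj1 hcl
        have htake2 : p.take (2*(j+1)) = p.take (2*j) ++ [p[2*j], p[2*j+1]] := by
          have e1 : 2*(j+1) = (2*j+1)+1 := by ring
          rw [e1, List.take_succ, List.getElem?_eq_getElem hj1, List.take_succ,
            List.getElem?_eq_getElem hj0]
          simp only [Option.toList_some, List.append_assoc, List.singleton_append]
        rw [htake2] at hc ⊢
        simp only [List.map_append, List.mem_append, List.map_cons, List.map_nil,
          List.mem_cons, List.not_mem_nil, or_false] at hc ⊢
        rcases hc with h | h | h
        · exact Or.inl (hcl c h)
        · refine Or.inr (Or.inr ?_)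
          rw [h, hp1]
          rfl
        · refine Or.inr (Or.inl ?_)
          rw [h, hp1]
          simp only [resp]
          rw [hf2]
    have hPaired : Paired f p := by
      intro i
      by_cases hi : 2*i+1 < p.length
      · rw [List.getElem?_eq_getElem hi, List.getElem?_eq_getElem (show 2*i < p.length by omega)]
        simp only [Option.map_some]
        exact congrArg some (hstep i hi (hclosure i (by omega)))
      · have hi2 : ¬ (2*i < p.length) := by
          intro h
          rcases hEven with ⟨t, ht⟩
          omega
        rw [List.getElem?_eq_none (by omega), List.getElem?_eq_none (by omega)]
        simp
    have hcov : a ∈ p.map Prod.fst :=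
      mem_of_complete' hNodup (by rw [List.length_map, hlen]) a
    rcases sum_core f a b hf2 hfa hab1 hsyll p.length p le_rfl hPaired hEven hNodup hleg.2 with
      ⟨hna, _⟩ | ⟨_, s, hs, hT⟩
    · exact absurd hcov hna
    · exact ⟨s, hs, hT⟩


lemma exists_f (n : List ℕ) (hk : 3 ≤ n.length) (h1 : Odd (n.getD 0 0))
    (hlast : Odd (n.getD (n.length - 1) 0))
    (hmid : ∀ i : ℕ, 0 < i → i < n.length - 1 → Even (n.getD i 0)) :
    ∃ (f : Cr n → Cr n) (a b : Cr n),
      (∀ c, f (f c) = c) ∧ (∀ c, f c ≠ c) ∧ f a = b ∧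
      ((a.1 : ℕ) = 0) ∧ ((b.1 : ℕ) = n.length - 1) ∧
      (∀ c, c ≠ a → c ≠ b → (f c).1 = c.1) := by
  classical
  have h0k : 0 < n.length := by omega
  have hKk : n.length - 1 < n.length := by omega
  have e0 : n.get ⟨0, h0k⟩ = n.getD 0 0 := by rw [List.getD_eq_getElem n 0 h0k]; rfl
  have e1 : n.get ⟨n.length - 1, hKk⟩ = n.getD (n.length - 1) 0 := by
    rw [List.getD_eq_getElem n 0 hKk]; rfl
  have hn0 : Odd (n.get ⟨0, h0k⟩) := e0 ▸ h1
  have hn1 : Odd (n.get ⟨n.length - 1, hKk⟩) := e1 ▸ hlast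
  have hn0pos : 0 < n.get ⟨0, h0k⟩ := hn0.pos
  have hn1pos : 0 < n.get ⟨n.length - 1, hKk⟩ := hn1.pos
  have hm2 : (n.get ⟨0, h0k⟩) % 2 = 1 := Nat.odd_iff.mp hn0
  have hm3 : (n.get ⟨n.length - 1, hKk⟩) % 2 = 1 := Nat.odd_iff.mp hn1
  set a : Cr n := ⟨⟨0, h0k⟩, ⟨n.get ⟨0, h0k⟩ - 1, by omega⟩⟩ with ha
  set b : Cr n := ⟨⟨n.length - 1, hKk⟩, ⟨n.get ⟨n.length - 1, hKk⟩ - 1, by omega⟩⟩ with hb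
  have hab : a ≠ b := by
    intro h
    have := congrArg (fun c : Cr n => (c.1 : ℕ)) h
    simp [ha, hb] at this
    omega
  have hpar : ∀ i : Fin n.length, (i:ℕ) ≠ 0 → (i:ℕ) ≠ n.length - 1 → (n.get i) % 2 = 0 := by
    intro i hI0 hI1
    have h2 := hmid i (by omega) (by have := i.2; omega)
    have e : n.getD (i:ℕ) 0 = n.get i := by rw [List.getD_eq_getElem n 0 i.2]; rfl
    rw [e] at h2
    exact Nat.even_iff.mp h2
  have sigma_snd : ∀ (i : Fin n.length) (x y : Fin (n.get i)), (⟨i,x⟩ : Cr n) = ⟨i,y⟩ → x = y := by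
    intro i x y h
    simpa using h
  have hbound : ∀ c : Cr n, c ≠ a → c ≠ b → mate (c.2 : ℕ) < n.get c.1 := by
    rintro ⟨i, j⟩ hca hcb
    simp only [mate]
    split
    case isTrue hpar2 =>
      have hj : (j : ℕ) < n.get i := j.2
      rcases Nat.lt_or_ge ((j:ℕ)+1) (n.get i) with h | h
      · exact h
      · exfalso
        by_cases hI0 : (i:ℕ) = 0
        · apply hca
          have hii : i = ⟨0, h0k⟩ := Fin.ext hI0
          subst hii
          exact congrArg (fun x => (⟨(⟨0, h0k⟩ : Fin n.length), x⟩ : Cr n))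
            (Fin.ext (show (j:ℕ) = n.get ⟨0, h0k⟩ - 1 by omega))
        · by_cases hI1 : (i:ℕ) = n.length - 1
          · apply hcb
            have hii : i = ⟨n.length - 1, hKk⟩ := Fin.ext hI1
            subst hii
            exact congrArg (fun x => (⟨(⟨n.length - 1, hKk⟩ : Fin n.length), x⟩ : Cr n))
              (Fin.ext (show (j:ℕ) = n.get ⟨n.length - 1, hKk⟩ - 1 by omega))
          · have := hpar i hI0 hI1
            omega
    case isFalse hpar2 =>
      have := j.2
      omega
  have hmateA : ∀ (i : Fin n.length) (j : Fin (n.get i)) (h : mate (j:ℕ) < n.get i),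
      (⟨i, ⟨mate (j:ℕ), h⟩⟩ : Cr n) ≠ a ∧ (⟨i, ⟨mate (j:ℕ), h⟩⟩ : Cr n) ≠ b := by
    intro i j h
    constructor
    · intro he
      have h1' : i = ⟨0, h0k⟩ := congrArg Sigma.fst he
      subst h1'
      have h2' : (⟨mate (j:ℕ), h⟩ : Fin (n.get ⟨0, h0k⟩)) = ⟨n.get ⟨0, h0k⟩ - 1, by omega⟩ :=
        sigma_snd _ _ _ he
      have h3' : mate (j:ℕ) = n.get ⟨0, h0k⟩ - 1 := congrArg Fin.val h2'
      have hj := j.2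
      simp only [mate] at h3'
      split at h3' <;> omega
    · intro he
      have h1' : i = ⟨n.length - 1, hKk⟩ := congrArg Sigma.fst he
      subst h1'
      have h2' : (⟨mate (j:ℕ), h⟩ : Fin (n.get ⟨n.length - 1, hKk⟩)) =
          ⟨n.get ⟨n.length - 1, hKk⟩ - 1, by omega⟩ := sigma_snd _ _ _ he
      have h3' : mate (j:ℕ) = n.get ⟨n.length - 1, hKk⟩ - 1 := congrArg Fin.val h2'
      have hj := j.2
      simp only [mate] at h3'
      split at h3' <;> omega
  set F : Cr n → Cr n := fun c => if c = a then b else if c = b then a else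
      if h : mate (c.2:ℕ) < n.get c.1 then ⟨c.1, ⟨mate (c.2:ℕ), h⟩⟩ else c with hF
  have hFa : F a = b := by rw [hF]; simp
  have hFb : F b = a := by
    rw [hF]; simp [Ne.symm hab]
  have hFc : ∀ (c : Cr n) (hca : c ≠ a) (hcb : c ≠ b),
      F c = ⟨c.1, ⟨mate (c.2:ℕ), hbound c hca hcb⟩⟩ := by
    intro c hca hcb
    rw [hF]; simp only []
    rw [if_neg hca, if_neg hcb, dif_pos (hbound c hca hcb)]
  refine ⟨F, a, b, ?_, ?_, hFa, rfl, rfl, ?_⟩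
  · intro c
    by_cases hca : c = a
    · subst hca; rw [hFa, hFb]
    · by_cases hcb : c = b
      · subst hcb; rw [hFb, hFa]
      · obtain ⟨i, j⟩ := c
        have h := hbound ⟨i, j⟩ hca hcb
        rw [hFc ⟨i, j⟩ hca hcb]
        obtain ⟨hna, hnb⟩ := hmateA i j h
        rw [hFc _ hna hnb]
        exact congrArg (Sigma.mk i) (Fin.ext (mate_mate (j:ℕ)))
  · intro c
    by_cases hca : c = a
    · subst hca; rw [hFa]; exact Ne.symm hab
    · by_cases hcb : c = b
      · subst hcb; rw [hFb]; exact hab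
      · obtain ⟨i, j⟩ := c
        rw [hFc ⟨i, j⟩ hca hcb]
        intro he
        exact mate_ne (j:ℕ) (congrArg Fin.val (sigma_snd _ _ _ he))
  · intro c hca hcb
    rw [hFc c hca hcb]

end ResGame

open ResGame in
/-- in the resolution game on `(n_1, …, n_k)` with `k ≥ 3`, `n_1` and
`n_k` odd, and all intermediate `n_i` even, the second player can force
`s_1 = s_k ∈ {1, -1}` and `s_i = 0` for all `1 < i < k`. -/
theorem second_forces_equal_ends (n : List ℕ) (hk : 3 ≤ n.length)
    (h1 : Odd (n.getD 0 0)) (hlast : Odd (n.getD (n.length - 1) 0))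
    (hmid : ∀ i : ℕ, 0 < i → i < n.length - 1 → Even (n.getD i 0)) :
    CanForce (C := Cr n) 1 (fun p =>
      ((result n p).getD 0 0 = 1 ∨ (result n p).getD 0 0 = -1) ∧
      (result n p).getD (n.length - 1) 0 = (result n p).getD 0 0 ∧
      ∀ i : ℕ, 0 < i → i < n.length - 1 → (result n p).getD i 0 = 0) := by
  classical
  obtain ⟨f, a, b, hf2, hfix, hfa, ha1, hb1, hsyll⟩ := exists_f n hk h1 hlast hmid
  have hab1 : a.1 ≠ b.1 := by
    intro h
    have := congrArg Fin.val h
    omega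
  have heven : Even (Fintype.card (Cr n)) := by
    rw [Fintype.card_sigma]
    simp only [Fintype.card_fin]
    have h0k : 0 < n.length := by omega
    have hKk : n.length - 1 < n.length := by omega
    set i0 : Fin n.length := ⟨0, h0k⟩ with hi0
    set i1 : Fin n.length := ⟨n.length - 1, hKk⟩ with hi1
    have hne : i0 ≠ i1 := by
      intro h
      have : (0:ℕ) = n.length - 1 := congrArg Fin.val h
      omega
    rw [← Finset.add_sum_erase _ _ (Finset.mem_univ i0)]
    rw [← Finset.add_sum_erase _ _ (Finset.mem_erase.mpr ⟨Ne.symm hne, Finset.mem_univ i1⟩)]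
    have hrest : Even (∑ i ∈ (Finset.univ.erase i0).erase i1, n.get i) := by
      apply Finset.even_sum
      intro i hi
      simp only [Finset.mem_erase] at hi
      have hI1 : (i : ℕ) ≠ n.length - 1 := fun h => hi.1 (Fin.ext h)
      have hI0 : (i : ℕ) ≠ 0 := fun h => hi.2.1 (Fin.ext h)
      have h2 := hmid i (by omega) (by have := i.2; omega)
      have e : n.getD (i : ℕ) 0 = n.get i := by rw [List.getD_eq_getElem n 0 i.2]; rfl
      rwa [e] at h2
    have hodd0 : Odd (n.get i0) := by
      have e : n.getD 0 0 = n.get i0 := by rw [List.getD_eq_getElem n 0 h0k]; rfl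
      rwa [e] at h1
    have hodd1 : Odd (n.get i1) := by
      have e : n.getD (n.length - 1) 0 = n.get i1 := by rw [List.getD_eq_getElem n 0 hKk]; rfl
      rwa [e] at hlast
    rw [← add_assoc]
    exact (hodd0.add_odd hodd1).add hrest
  obtain ⟨σ, hσleg, hforce⟩ := force_abstract f a b hf2 hfix hfa hab1 hsyll heven
  refine ⟨σ, hσleg, ?_⟩
  intro p hleg hlen hfol
  obtain ⟨s, hs, hT⟩ := hforce p hleg hlen hfol
  have h0k : 0 < n.length := by omega
  have hKk : n.length - 1 < n.length := by omega
  have hres : ∀ (i : ℕ) (h : i < n.length), (result n p).getD i 0 = T ⟨i, h⟩ p := by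
    intro i h
    have hlen' : i < (result n p).length := by
      simp [result]
      exact h
    rw [List.getD_eq_getElem _ _ hlen']
    show (result n p)[i] = _
    simp only [result, List.getElem_map, List.getElem_finRange]
    rfl
  have hA : (⟨0, h0k⟩ : Fin n.length) = a.1 := Fin.ext (show (0:ℕ) = (a.1:ℕ) by omega)
  have hB : (⟨n.length - 1, hKk⟩ : Fin n.length) = b.1 :=
    Fin.ext (show n.length - 1 = (b.1:ℕ) by omega)
  have e0 : (result n p).getD 0 0 = s := by
    rw [hres 0 h0k, hT, if_pos hA,
      if_neg (fun h => by have : (0:ℕ) = (b.1:ℕ) := congrArg Fin.val h; omega)]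
    ring
  have eK : (result n p).getD (n.length - 1) 0 = s := by
    rw [hres _ hKk, hT,
      if_neg (fun h => by have : n.length - 1 = (a.1:ℕ) := congrArg Fin.val h; omega), if_pos hB]
    ring
  refine ⟨by rw [e0]; exact hs, by rw [e0, eK], ?_⟩
  intro i hi0 hi1
  have hik : i < n.length := by omega
  rw [hres i hik, hT,
    if_neg (fun h => by have : i = (a.1:ℕ) := congrArg Fin.val h; omega),
    if_neg (fun h => by have : i = (b.1:ℕ) := congrArg Fin.val h; omega)]
  ring
end

section
/- For all ε, δ ∈ {1, −1} and every m ≥ 0, the word (ε, 0, …, 0, δ) with exactly m zeros between ε and δ satisfies (ε, 0, …, 0, δ) ≈ (ε + δ); and for every c ∈ ℤ and all r, s ≥ 0, the word consisting of 2r zeros, then c, then s zeros satisfies (0, …, 0, c, 0, …, 0) ≈ (c). -/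
/-- Remove trailing zeros. -/
lemma teq_drop_trailing (l : List ℤ) (h : l ≠ []) : ∀ s : ℕ,
    TEq (l ++ List.replicate s 0) l := by
  intro s
  induction s with
  | zero => simpa using TEq.refl l
  | succ n ih =>
      have h1 : l ++ List.replicate (n + 1) 0 = (l ++ List.replicate n 0) ++ [0] := by
        simp [List.replicate_succ' (n := n)]
      rw [h1]
      exact TEq.trans (TEq.move0 _ (by simp [h])) ih

/-- Remove an even number of leading zeros. -/
lemma teq_drop_leading (w : List ℤ) (h : w ≠ []) : ∀ r : ℕ,
    TEq (List.replicate (2 * r) 0 ++ w) w := by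
  intro r
  induction r with
  | zero => simpa using TEq.refl w
  | succ n ih =>
      have h1 : List.replicate (2 * (n + 1)) 0 ++ w
          = ([] : List ℤ) ++ (0 : ℤ) :: 0 :: (List.replicate (2 * n) 0 ++ w) := by
        have : 2 * (n + 1) = (2 * n) + 1 + 1 := by ring
        simp [this, List.replicate_succ]
      rw [h1]
      refine TEq.trans (TEq.move2 [] _ ?_) (by simpa using ih)
      simp [h]

lemma teq_step (ε δ : ℤ) (m : ℕ) :
    TEq (ε :: (List.replicate (m + 2) 0 ++ [δ])) (ε :: (List.replicate m 0 ++ [δ])) := by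
  have h := TEq.move1 [] (List.replicate m 0 ++ [δ]) ε 0
  simpa [List.replicate_succ] using h

/-- for signs `ε, δ ∈ {1, -1}` and any number `m ≥ 0` of intermediate
zeros, `(ε, 0, …, 0, δ) ≈ (ε + δ)`; and for any `c ∈ ℤ`, `r, s ≥ 0`, the word of `2r`
zeros, then `c`, then `s` zeros reduces to `(c)`. -/
theorem reduction_lemmas :
    (∀ ε δ : ℤ, (ε = 1 ∨ ε = -1) → (δ = 1 ∨ δ = -1) → ∀ m : ℕ,
      TEq (ε :: (List.replicate m 0 ++ [δ])) [ε + δ]) ∧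
    (∀ c : ℤ, ∀ r s : ℕ,
      TEq (List.replicate (2 * r) 0 ++ c :: List.replicate s 0) [c]) := by
  constructor
  · intro ε δ hε hδ m
    induction m using Nat.strong_induction_on with
    | _ m ih =>
      match m with
      | 0 =>
          rcases hε with rfl | rfl
          · simpa [add_comm] using TEq.move4 δ []
          · simpa [sub_eq_add_neg, add_comm] using TEq.move5 δ []
      | 1 =>
          simpa [List.replicate_succ] using TEq.move1 [] [] ε δ
      | (m + 2) =>
          exact TEq.trans (teq_step ε δ m) (ih m (by omega))
  · intro c r s
    refine TEq.trans (teq_drop_leading _ (by simp) r) ?_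
    simpa using teq_drop_trailing [c] (by simp) s
end
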